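/- arXiv:1609.03514 — 5 statements merged into one kernel-verified Lean document; each statement's English description precedes it below -/
import Mathlib

section
/- Let f : ℝ → ℂ be a 2π-periodic continuous function that is Hölder continuous of order s ∈ (0,1] with constant A, i.e. |f(x-y) - f(x)| ≤ A|y|^s for all x, y. Then for every h ∈ ℝ, the sum over ξ ∈ ℤ of |e^{-iξh} - 1|²·|f̂(ξ)|² is at most A²·|h|^{2s}, where f̂(ξ) = (1/(2π))∫_0^{2π} f(x)e^{-iξx} dx is the ξ-th Fourier coefficient. -/
open MeasureTheory Real Complex intervalIntegral Function

/-- ξ-th Fourier coefficient of a 2π-periodic function. -/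
noncomputable def fourierCoef (f : ℝ → ℂ) (ξ : ℤ) : ℂ :=
  (1 / (2 * Real.pi)) * ∫ x in (0:ℝ)..(2 * Real.pi), f x * Complex.exp (-(Complex.I * (ξ:ℂ) * (x:ℂ)))

theorem plancherel_holder_difference (f : ℝ → ℂ) (hf : Continuous f)
    (hper : ∀ x, f (x + 2 * Real.pi) = f x)
    (s A : ℝ) (hs0 : 0 < s) (hs1 : s ≤ 1)
    (hHol : ∀ x y : ℝ, ‖f (x - y) - f x‖ ≤ A * |y| ^ s)
    (h : ℝ) :
    ∑' ξ : ℤ, ‖Complex.exp (-(Complex.I * (ξ:ℂ) * (h:ℂ))) - 1‖ ^ 2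
        * ‖fourierCoef f ξ‖ ^ 2
      ≤ A ^ 2 * |h| ^ (2 * s) := by
  have hπ : (0:ℝ) < 2 * Real.pi := by positivity
  haveI : Fact ((0:ℝ) < 2 * Real.pi) := ⟨hπ⟩
  have perf : Function.Periodic f (2 * Real.pi) := hper
  set g : ℝ → ℂ := fun x => f (x - h) - f x with hg
  have perg : Function.Periodic g (2 * Real.pi) := by
    intro x
    simp only [hg]
    rw [show x + 2 * Real.pi - h = (x - h) + 2 * Real.pi by ring, perf, perf]
  have contg : Continuous g := (hf.comp (continuous_id.sub continuous_const)).sub hf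
  set G : AddCircle (2 * Real.pi) → ℂ := perg.lift with hG
  have contG : Continuous G := continuous_coinduced_dom.mpr contg
  -- fourier character formula
  have fourier_eq : ∀ (n : ℤ) (x : ℝ),
      (fourier (-n) (x : AddCircle (2 * Real.pi)) : ℂ) = Complex.exp (-(Complex.I * n * x)) := by
    intro n x
    rw [fourier_coe_apply]
    congr 1
    have h2 : (Real.pi : ℂ) ≠ 0 := by exact_mod_cast Real.pi_ne_zero
    push_cast
    field_simp
  -- coefficient of lift of g, step 1: the key integral identity
  have coefG : ∀ n : ℤ, fourierCoeff G n
      = (Complex.exp (-(Complex.I * n * h)) - 1) * fourierCoef f n := by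
    intro n
    have expper : Complex.exp (-(Complex.I * n * (2 * Real.pi : ℝ))) = 1 := by
      rw [show -(Complex.I * n * ((2 * Real.pi : ℝ) : ℂ))
          = ((-n : ℤ) : ℂ) * (2 * Real.pi * Complex.I) by push_cast; ring,
        Complex.exp_int_mul_two_pi_mul_I]
    have per2 : Function.Periodic
        (fun x : ℝ => Complex.exp (-(Complex.I * n * x)) * f x) (2 * Real.pi) := by
      intro x
      simp only
      rw [perf]
      have : (-(Complex.I * n * ((x + 2 * Real.pi : ℝ) : ℂ)))
          = -(Complex.I * n * x) + -(Complex.I * n * ((2 * Real.pi : ℝ) : ℂ)) := by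
        push_cast; ring
      rw [this, Complex.exp_add, expper, mul_one]
    have i1 : IntervalIntegrable (fun x : ℝ => Complex.exp (-(Complex.I * n * x)) * f (x - h))
        MeasureTheory.volume 0 (2 * Real.pi) :=
      ((Complex.continuous_exp.comp (by continuity)).mul
        (hf.comp (continuous_id.sub continuous_const))).intervalIntegrable _ _
    have i2 : IntervalIntegrable (fun x : ℝ => Complex.exp (-(Complex.I * n * x)) * f x)
        MeasureTheory.volume 0 (2 * Real.pi) :=
      ((Complex.continuous_exp.comp (by continuity)).mul hf).intervalIntegrable _ _
    have sub1 : (∫ x in (0:ℝ)..(2 * Real.pi), Complex.exp (-(Complex.I * n * x)) * f (x - h))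
        = Complex.exp (-(Complex.I * n * h))
          * ∫ x in (0:ℝ)..(2 * Real.pi), Complex.exp (-(Complex.I * n * x)) * f x := by
      have e2 : ∀ x : ℝ, Complex.exp (-(Complex.I * n * x)) * f (x - h)
          = Complex.exp (-(Complex.I * n * h))
            * (Complex.exp (-(Complex.I * n * ((x - h : ℝ) : ℂ))) * f (x - h)) := by
        intro x
        rw [← mul_assoc, ← Complex.exp_add]
        congr 2
        push_cast; ring
      simp_rw [e2]
      rw [intervalIntegral.integral_const_mul]
      congr 1
      rw [intervalIntegral.integral_comp_sub_right
        (fun x : ℝ => Complex.exp (-(Complex.I * n * x)) * f x) h]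
      rw [show (2 * Real.pi - h) = 0 - h + 2 * Real.pi by ring]
      rw [per2.intervalIntegral_add_eq (0 - h) 0, zero_add]
    have key : (∫ x in (0:ℝ)..(2 * Real.pi),
          (fourier (-n) (x : AddCircle (2 * Real.pi)) : ℂ) • G x)
        = (Complex.exp (-(Complex.I * n * h)) - 1)
          * ∫ x in (0:ℝ)..(2 * Real.pi), f x * Complex.exp (-(Complex.I * n * x)) := by
      have e1 : (∫ x in (0:ℝ)..(2 * Real.pi),
            (fourier (-n) (x : AddCircle (2 * Real.pi)) : ℂ) • G x)
          = ∫ x in (0:ℝ)..(2 * Real.pi),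
              (Complex.exp (-(Complex.I * n * x)) * f (x - h)
                - Complex.exp (-(Complex.I * n * x)) * f x) := by
        apply intervalIntegral.integral_congr
        intro x _
        simp only [hG, Periodic.lift_coe, smul_eq_mul, fourier_eq, hg]
        ring
      rw [e1, intervalIntegral.integral_sub i1 i2, sub1]
      have : (∫ x in (0:ℝ)..(2 * Real.pi), Complex.exp (-(Complex.I * n * x)) * f x)
          = ∫ x in (0:ℝ)..(2 * Real.pi), f x * Complex.exp (-(Complex.I * n * x)) := by
        apply intervalIntegral.integral_congr
        intro x _
        ring
      rw [this]
      ring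
    rw [fourierCoeff_eq_intervalIntegral _ n 0, zero_add, key, fourierCoef, Complex.real_smul]
    push_cast
    ring
  -- Parseval
  set C : ℝ := A * |h| ^ s with hC
  have hGbound : ∀ t : AddCircle (2 * Real.pi), ‖G t‖ ≤ C := by
    intro t
    induction t using QuotientAddGroup.induction_on with
    | _ x =>
      rw [hG, Periodic.lift_coe]
      exact hHol x h
  have hC0 : (0:ℝ) ≤ C := le_trans (norm_nonneg _) (hGbound 0)
  set Gc : C(AddCircle (2 * Real.pi), ℂ) := ⟨G, contG⟩ with hGc
  set Glp : Lp ℂ 2 (@AddCircle.haarAddCircle (2 * Real.pi) _) :=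
    ContinuousMap.toLp 2 AddCircle.haarAddCircle ℂ Gc with hGlp
  have pars := tsum_sq_fourierCoeff Glp
  have coef_eq : ∀ n : ℤ, fourierCoeff (Glp : AddCircle (2 * Real.pi) → ℂ) n
      = fourierCoeff G n := fun n => fourierCoeff_toLp Gc n
  have hae : (Glp : AddCircle (2 * Real.pi) → ℂ) =ᵐ[AddCircle.haarAddCircle] G :=
    ContinuousMap.coeFn_toLp AddCircle.haarAddCircle Gc
  have int_eq : (∫ t : AddCircle (2 * Real.pi), ‖(Glp : AddCircle (2 * Real.pi) → ℂ) t‖ ^ 2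
        ∂AddCircle.haarAddCircle)
      = ∫ t : AddCircle (2 * Real.pi), ‖G t‖ ^ 2 ∂AddCircle.haarAddCircle :=
    integral_congr_ae (hae.mono fun t ht => by simp only [ht])
  have int_le : (∫ t : AddCircle (2 * Real.pi), ‖G t‖ ^ 2 ∂AddCircle.haarAddCircle) ≤ C ^ 2 := by
    have intable : Integrable (fun t : AddCircle (2 * Real.pi) => ‖G t‖ ^ 2)
        AddCircle.haarAddCircle :=
      ((contG.norm.pow 2)).integrable_of_hasCompactSupport
        (HasCompactSupport.of_compactSpace _)
    calc (∫ t : AddCircle (2 * Real.pi), ‖G t‖ ^ 2 ∂AddCircle.haarAddCircle)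
        ≤ ∫ _t : AddCircle (2 * Real.pi), C ^ 2 ∂AddCircle.haarAddCircle := by
          apply integral_mono intable (integrable_const _)
          intro t
          exact pow_le_pow_left₀ (norm_nonneg _) (hGbound t) 2
      _ = C ^ 2 := by simp
  -- conclude
  have term_eq : ∀ ξ : ℤ, ‖Complex.exp (-(Complex.I * (ξ:ℂ) * (h:ℂ))) - 1‖ ^ 2
        * ‖fourierCoef f ξ‖ ^ 2
      = ‖fourierCoeff (Glp : AddCircle (2 * Real.pi) → ℂ) ξ‖ ^ 2 := by
    intro ξ
    rw [coef_eq, coefG, norm_mul, mul_pow]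
  calc (∑' ξ : ℤ, ‖Complex.exp (-(Complex.I * (ξ:ℂ) * (h:ℂ))) - 1‖ ^ 2
        * ‖fourierCoef f ξ‖ ^ 2)
      = ∑' ξ : ℤ, ‖fourierCoeff (Glp : AddCircle (2 * Real.pi) → ℂ) ξ‖ ^ 2 := by
        exact tsum_congr term_eq
    _ = ∫ t : AddCircle (2 * Real.pi), ‖(Glp : AddCircle (2 * Real.pi) → ℂ) t‖ ^ 2
          ∂AddCircle.haarAddCircle := pars
    _ ≤ C ^ 2 := by rw [int_eq]; exact int_le
    _ = A ^ 2 * |h| ^ (2 * s) := by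
        rw [hC, mul_pow]
        congr 1
        rw [← Real.rpow_natCast (|h| ^ s) 2, ← Real.rpow_mul (abs_nonneg h)]
        norm_num
        ring_nf
end

section
/- Let 0 ≤ ρ ≤ 1 and let σ : ℤ → ℂ satisfy |σ(ξ)| ≤ C|ξ|^{-ρ} for all ξ ≠ 0. Let f : ℝ → ℂ be a 2π-periodic function that is Hölder continuous of order s ∈ (0,1] with constant A. Then for every m ∈ ℕ, the sum over integers ξ with 2^m ≤ |ξ| < 2^{m+1} of |σ(ξ)·f̂(ξ)|² is bounded by C'·2^{-2m(ρ+s)}·A², where C' is a constant depending only on C (e.g. C' = C²·(2π/3)^{2s}·3, any explicit admissible constant is acceptable). -/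
open MeasureTheory Complex Real AddCircle

/-- The dyadic block `{ξ ∈ ℤ : 2^m ≤ |ξ| < 2^(m+1)}`. -/
noncomputable def dyadicBlock (m : ℕ) : Finset ℤ :=
  (Finset.Icc (-(2^(m+1) : ℤ)) (2^(m+1))).filter fun ξ => 2^m ≤ |ξ| ∧ |ξ| < 2^(m+1)

namespace DyadicAux

instance fact2pi : Fact (0 < 2 * Real.pi) := ⟨by positivity⟩

lemma lift_continuous {f : ℝ → ℂ} (hper : Function.Periodic f (2 * Real.pi)) (hf : Continuous f) :
    Continuous (hper.lift : AddCircle (2 * Real.pi) → ℂ) :=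
  continuous_coinduced_dom.mpr hf

lemma fourierCoef_eq {f : ℝ → ℂ} (hper : Function.Periodic f (2 * Real.pi)) (ξ : ℤ) :
    fourierCoef f ξ = fourierCoeff (hper.lift : AddCircle (2 * Real.pi) → ℂ) ξ := by
  rw [fourierCoeff_eq_intervalIntegral _ ξ 0, zero_add]
  have : ∀ x : ℝ, (fourier (-ξ) (x : AddCircle (2 * Real.pi))) • hper.lift (x : AddCircle (2 * Real.pi))
      = f x * Complex.exp (-(Complex.I * (ξ:ℂ) * (x:ℂ))) := by
    intro x
    rw [Function.Periodic.lift_coe, fourier_coe_apply, smul_eq_mul, mul_comm]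
    congr 1
    congr 1
    have h2 : ((2 * Real.pi : ℝ) : ℂ) ≠ 0 := by
      simpa using Real.pi_ne_zero
    have hpi : (Real.pi : ℂ) ≠ 0 := by simpa using Real.pi_ne_zero
    field_simp
    push_cast
    ring
  simp_rw [this]
  rw [fourierCoef, Complex.real_smul]
  push_cast
  ring_nf

lemma exp_int_per (ξ : ℤ) (y : ℝ) :
    Complex.exp (-(Complex.I * (ξ:ℂ) * ((y : ℂ) + 2 * Real.pi))) = Complex.exp (-(Complex.I * ξ * y)) := by
  rw [show -(Complex.I * (ξ:ℂ) * ((y:ℂ) + 2 * Real.pi)) = -(Complex.I * ξ * y) + (-ξ : ℤ) * (2 * Real.pi * Complex.I) by push_cast; ring,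
    Complex.exp_add, Complex.exp_int_mul_two_pi_mul_I, mul_one]

lemma fourierCoef_shift {f : ℝ → ℂ}
    (hper : Function.Periodic f (2 * Real.pi)) (h : ℝ) (ξ : ℤ) :
    fourierCoef (fun x => f (x - h)) ξ
      = Complex.exp (-(Complex.I * (ξ:ℂ) * (h:ℂ))) * fourierCoef f ξ := by
  set G : ℝ → ℂ := fun y => f y * Complex.exp (-(Complex.I * (ξ:ℂ) * (y:ℂ))) with hG
  have hGper : Function.Periodic G (2 * Real.pi) := by
    intro y
    simp only [hG, hper y]
    push_cast
    rw [exp_int_per]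
  have key : (∫ x in (0:ℝ)..(2 * Real.pi), f (x - h) * Complex.exp (-(Complex.I * (ξ:ℂ) * (x:ℂ))))
      = Complex.exp (-(Complex.I * (ξ:ℂ) * (h:ℂ))) * ∫ x in (0:ℝ)..(2 * Real.pi), G x := by
    have step1 : ∀ x : ℝ, f (x - h) * Complex.exp (-(Complex.I * (ξ:ℂ) * (x:ℂ)))
        = Complex.exp (-(Complex.I * (ξ:ℂ) * (h:ℂ))) * G (x - h) := by
      intro x
      simp only [hG]
      have he : Complex.exp (-(Complex.I * (ξ:ℂ) * (h:ℂ))) * Complex.exp (-(Complex.I * (ξ:ℂ) * ((x - h : ℝ) : ℂ)))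
          = Complex.exp (-(Complex.I * (ξ:ℂ) * (x:ℂ))) := by
        rw [← Complex.exp_add]; congr 1; push_cast; ring
      rw [← he]; ring
    simp_rw [step1]
    rw [intervalIntegral.integral_const_mul]
    congr 1
    rw [intervalIntegral.integral_comp_sub_right G h]
    have := hGper.intervalIntegral_add_eq (0 - h) 0
    simpa [zero_sub, zero_add, sub_eq_add_neg, add_comm] using this
  rw [fourierCoef, fourierCoef, key]
  ring

lemma cos_le_neg_half {t : ℝ} (h1 : 2 * Real.pi / 3 ≤ |t|) (h2 : |t| ≤ 4 * Real.pi / 3) :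
    Real.cos t ≤ -(1/2) := by
  have hpi := Real.pi_pos
  rw [← Real.cos_abs]
  set u := |t|
  have : Real.cos (u - Real.pi) = -Real.cos u := Real.cos_sub_pi u
  have habs : |u - Real.pi| ≤ Real.pi / 3 := by
    rw [abs_le]; constructor <;> linarith
  have h3 : Real.cos (Real.pi / 3) ≤ Real.cos |u - Real.pi| := by
    apply Real.cos_le_cos_of_nonneg_of_le_pi (abs_nonneg _) (by linarith) habs
  rw [Real.cos_abs, Real.cos_pi_div_three] at h3
  linarith

lemma exp_sub_one_sq {t : ℝ} (h1 : 2 * Real.pi / 3 ≤ |t|) (h2 : |t| ≤ 4 * Real.pi / 3) :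
    (3:ℝ) ≤ ‖Complex.exp (-((t:ℂ) * Complex.I)) - 1‖ ^ 2 := by
  have : Complex.exp (-((t:ℂ) * Complex.I)) = ((Real.cos (-t) : ℝ) : ℂ) + ((Real.sin (-t) : ℝ) : ℂ) * Complex.I := by
    rw [show -((t:ℂ) * Complex.I) = ((-t : ℝ) : ℂ) * Complex.I by push_cast; ring,
      Complex.exp_mul_I]
    rw [Complex.ofReal_cos, Complex.ofReal_sin]
  rw [this]
  have hns : ‖((Real.cos (-t) : ℝ) : ℂ) + ((Real.sin (-t) : ℝ) : ℂ) * Complex.I - 1‖ ^ 2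
      = (Real.cos (-t) - 1) ^ 2 + (Real.sin (-t)) ^ 2 := by
    rw [show ((Real.cos (-t) : ℝ) : ℂ) + ((Real.sin (-t) : ℝ) : ℂ) * Complex.I - 1
        = ((Real.cos (-t) - 1 : ℝ) : ℂ) + ((Real.sin (-t) : ℝ) : ℂ) * Complex.I by push_cast; ring]
    rw [Complex.sq_norm, Complex.normSq_add_mul_I]
  rw [hns, Real.cos_neg, Real.sin_neg]
  have hc := cos_le_neg_half h1 h2
  nlinarith [Real.sin_sq_add_cos_sq t]

lemma bessel (F : C(AddCircle (2 * Real.pi), ℂ)) (B : ℝ) (hB : 0 ≤ B)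
    (hF : ∀ x, ‖F x‖ ≤ B) (S : Finset ℤ) :
    ∑ ξ ∈ S, ‖fourierCoeff (⇑F) ξ‖ ^ 2 ≤ B ^ 2 := by
  set x : Lp ℂ 2 (@haarAddCircle (2 * Real.pi) _) :=
    ContinuousMap.toLp (E := ℂ) 2 haarAddCircle ℂ F with hx
  have h1 : ∀ ξ : ℤ, fourierCoeff (⇑F) ξ = fourierBasis.repr x ξ := by
    intro ξ
    rw [fourierBasis_repr, hx, fourierCoeff_toLp]
  have hae : ∀ᵐ t ∂(@haarAddCircle (2 * Real.pi) _), ‖x t‖ ≤ B := by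
    filter_upwards [ContinuousMap.coeFn_toLp (p := 2) (𝕜 := ℂ) haarAddCircle F] with t ht
    rw [ht]; exact hF t
  have hnorm : ‖x‖ ≤ B := by
    have h2 := MeasureTheory.Lp.norm_le_of_ae_bound hB hae
    have h3 : (measureUnivNNReal (@haarAddCircle (2 * Real.pi) _) : ℝ) = 1 := by
      simp [measureUnivNNReal]
    rw [h3] at h2
    simpa using h2
  calc ∑ ξ ∈ S, ‖fourierCoeff (⇑F) ξ‖ ^ 2
      = ∑ ξ ∈ S, ‖(inner ℂ (fourierBasis ξ) x : ℂ)‖ ^ 2 := by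
        refine Finset.sum_congr rfl fun ξ _ => ?_
        rw [h1 ξ, fourierBasis.repr_apply_apply]
    _ ≤ ‖x‖ ^ 2 := fourierBasis.orthonormal.sum_inner_products_le x
    _ ≤ B ^ 2 := by
        have := norm_nonneg x
        nlinarith

end DyadicAux

open DyadicAux

theorem dyadic_block_estimate (ρ C : ℝ) (hρ0 : 0 ≤ ρ) (hρ1 : ρ ≤ 1)
    (σ : ℤ → ℂ) (hσ : ∀ ξ : ℤ, ξ ≠ 0 → ‖σ ξ‖ ≤ C * |(ξ:ℝ)| ^ (-ρ))
    (f : ℝ → ℂ) (hf : Continuous f) (hper : ∀ x, f (x + 2 * Real.pi) = f x)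
    (s A : ℝ) (hs0 : 0 < s) (hs1 : s ≤ 1)
    (hHol : ∀ x y : ℝ, ‖f (x - y) - f x‖ ≤ A * |y| ^ s)
    (m : ℕ) :
    ∑ ξ ∈ dyadicBlock m, ‖σ ξ * fourierCoef f ξ‖ ^ 2
      ≤ (C ^ 2 * (2 * Real.pi / 3) ^ (2 * s) * 3) * (2:ℝ) ^ (-(2 * (m:ℝ) * (ρ + s))) * A ^ 2 := by
  have hpi := Real.pi_pos
  have hper' : Function.Periodic f (2 * Real.pi) := hper
  have hA : 0 ≤ A := by
    have h0 := hHol 0 1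
    rw [abs_one, Real.one_rpow, mul_one] at h0
    exact le_trans (norm_nonneg _) h0
  have hC : 0 ≤ C := by
    have h0 := hσ 1 one_ne_zero
    rw [show |((1:ℤ):ℝ)| = 1 by norm_num, Real.one_rpow, mul_one] at h0
    exact le_trans (norm_nonneg _) h0
  set h : ℝ := 2 * Real.pi / (3 * 2 ^ m) with hh
  have hhpos : 0 < h := by positivity
  set g : ℝ → ℂ := fun x => f (x - h) - f x with hg
  have hgc : Continuous g := (hf.comp (continuous_id.sub continuous_const)).sub hf
  have hgper : Function.Periodic g (2 * Real.pi) := by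
    intro x
    simp only [hg]
    rw [show x + 2 * Real.pi - h = (x - h) + 2 * Real.pi by ring, hper' (x - h), hper' x]
  -- pointwise bound on g
  have hgbdd : ∀ x : AddCircle (2 * Real.pi),
      ‖(ContinuousMap.mk (hgper.lift) (lift_continuous hgper hgc)) x‖ ≤ A * h ^ s := by
    intro x
    induction x using QuotientAddGroup.induction_on with
    | H a =>
      show ‖hgper.lift (a : AddCircle (2 * Real.pi))‖ ≤ A * h ^ s
      rw [Function.Periodic.lift_coe]
      have h0 := hHol a h
      rw [abs_of_pos hhpos] at h0
      simpa [hg] using h0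
  have hBess := bessel (ContinuousMap.mk (hgper.lift) (lift_continuous hgper hgc))
    (A * h ^ s) (by positivity) hgbdd (dyadicBlock m)
  -- fourier coefficients of g
  have hcoeff : ∀ ξ : ℤ, fourierCoeff (hgper.lift : AddCircle (2 * Real.pi) → ℂ) ξ
      = (Complex.exp (-(Complex.I * (ξ:ℂ) * (h:ℂ))) - 1) * fourierCoef f ξ := by
    intro ξ
    rw [← fourierCoef_eq hgper ξ]
    have hsplit : fourierCoef g ξ = fourierCoef (fun x => f (x - h)) ξ - fourierCoef f ξ := by
      simp only [fourierCoef, hg]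
      rw [← mul_sub, ← intervalIntegral.integral_sub]
      · congr 1
        apply intervalIntegral.integral_congr
        intro x _
        ring
      · exact ((hf.comp (continuous_id.sub continuous_const)).mul
          (Complex.continuous_exp.comp (by continuity))).intervalIntegrable _ _
      · exact (hf.mul (Complex.continuous_exp.comp (by continuity))).intervalIntegrable _ _
    rw [hsplit, fourierCoef_shift hper' h ξ]
    ring
  -- termwise estimate
  have hterm : ∀ ξ ∈ dyadicBlock m, ‖σ ξ * fourierCoef f ξ‖ ^ 2
      ≤ (C * (2:ℝ) ^ (-((m:ℝ) * ρ))) ^ 2 *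
        (3⁻¹ * ‖fourierCoeff (hgper.lift : AddCircle (2 * Real.pi) → ℂ) ξ‖ ^ 2) := by
    intro ξ hξ
    rw [dyadicBlock, Finset.mem_filter] at hξ
    obtain ⟨-, hξ1, hξ2⟩ := hξ
    have hξ0 : ξ ≠ 0 := by
      intro hz
      rw [hz, abs_zero] at hξ1
      exact absurd hξ1 (not_le.mpr (by positivity))
    have habs1 : (2:ℝ) ^ m ≤ |(ξ:ℝ)| := by
      rw [← Int.cast_abs]
      exact_mod_cast hξ1
    have habs2 : |(ξ:ℝ)| ≤ (2:ℝ) ^ (m + 1) := by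
      rw [← Int.cast_abs]
      exact_mod_cast hξ2.le
    -- σ bound
    have hσb : ‖σ ξ‖ ≤ C * (2:ℝ) ^ (-((m:ℝ) * ρ)) := by
      refine (hσ ξ hξ0).trans ?_
      have hmono : |(ξ:ℝ)| ^ (-ρ) ≤ ((2:ℝ) ^ m) ^ (-ρ) :=
        Real.rpow_le_rpow_of_nonpos (by positivity) habs1 (neg_nonpos.mpr hρ0)
      have hrw : ((2:ℝ) ^ m) ^ (-ρ) = (2:ℝ) ^ (-((m:ℝ) * ρ)) := by
        rw [← Real.rpow_natCast 2 m, ← Real.rpow_mul (by norm_num)]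
        ring_nf
      exact (mul_le_mul_of_nonneg_left hmono hC).trans_eq (by rw [hrw])
    -- exp lower bound
    have hexp : (3:ℝ) ≤ ‖Complex.exp (-(Complex.I * (ξ:ℂ) * (h:ℂ))) - 1‖ ^ 2 := by
      have harg : -(Complex.I * (ξ:ℂ) * (h:ℂ)) = -(((ξ * h : ℝ) : ℂ) * Complex.I) := by
        push_cast; ring
      rw [harg]
      have htabs : |(ξ:ℝ) * h| = |(ξ:ℝ)| * h := by
        rw [abs_mul, abs_of_pos hhpos]
      refine exp_sub_one_sq ?_ ?_
      · rw [htabs]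
        have : (2:ℝ) ^ m * h = 2 * Real.pi / 3 := by
          rw [hh]; field_simp
        calc 2 * Real.pi / 3 = (2:ℝ) ^ m * h := this.symm
          _ ≤ |(ξ:ℝ)| * h := by gcongr
      · rw [htabs]
        have : (2:ℝ) ^ (m + 1) * h = 4 * Real.pi / 3 := by
          rw [hh]; field_simp; ring
        calc |(ξ:ℝ)| * h ≤ (2:ℝ) ^ (m + 1) * h := by gcongr
          _ = 4 * Real.pi / 3 := this
    -- f-hat bound via g-hat
    have hfhat : ‖fourierCoef f ξ‖ ^ 2
        ≤ 3⁻¹ * ‖fourierCoeff (hgper.lift : AddCircle (2 * Real.pi) → ℂ) ξ‖ ^ 2 := by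
      rw [hcoeff ξ, norm_mul, mul_pow]
      have hnn := sq_nonneg ‖fourierCoef f ξ‖
      nlinarith [norm_nonneg (fourierCoef f ξ)]
    rw [norm_mul, mul_pow]
    have h1 : ‖σ ξ‖ ^ 2 ≤ (C * (2:ℝ) ^ (-((m:ℝ) * ρ))) ^ 2 :=
      pow_le_pow_left₀ (norm_nonneg _) hσb 2
    exact mul_le_mul h1 hfhat (by positivity) (by positivity)
  -- sum it up
  have hsum : ∑ ξ ∈ dyadicBlock m, ‖σ ξ * fourierCoef f ξ‖ ^ 2
      ≤ (C * (2:ℝ) ^ (-((m:ℝ) * ρ))) ^ 2 * (3⁻¹ * (A * h ^ s) ^ 2) := by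
    calc ∑ ξ ∈ dyadicBlock m, ‖σ ξ * fourierCoef f ξ‖ ^ 2
        ≤ ∑ ξ ∈ dyadicBlock m, (C * (2:ℝ) ^ (-((m:ℝ) * ρ))) ^ 2 *
            (3⁻¹ * ‖fourierCoeff (hgper.lift : AddCircle (2 * Real.pi) → ℂ) ξ‖ ^ 2) :=
          Finset.sum_le_sum hterm
      _ = (C * (2:ℝ) ^ (-((m:ℝ) * ρ))) ^ 2 * 3⁻¹ *
            ∑ ξ ∈ dyadicBlock m, ‖fourierCoeff (hgper.lift : AddCircle (2 * Real.pi) → ℂ) ξ‖ ^ 2 := by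
          rw [Finset.mul_sum]
          exact Finset.sum_congr rfl fun ξ _ => by ring
      _ ≤ (C * (2:ℝ) ^ (-((m:ℝ) * ρ))) ^ 2 * 3⁻¹ * (A * h ^ s) ^ 2 := by
          refine mul_le_mul_of_nonneg_left ?_ (by positivity)
          exact hBess
      _ = (C * (2:ℝ) ^ (-((m:ℝ) * ρ))) ^ 2 * (3⁻¹ * (A * h ^ s) ^ 2) := by ring
  refine hsum.trans ?_
  -- final algebra
  have e1 : ((2:ℝ) ^ (-((m:ℝ) * ρ))) ^ 2 = (2:ℝ) ^ (-(2 * (m:ℝ) * ρ)) := by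
    rw [← Real.rpow_natCast ((2:ℝ) ^ (-((m:ℝ) * ρ))) 2, ← Real.rpow_mul (by norm_num)]
    norm_num
    ring_nf
  have e2 : (h ^ s) ^ 2 = (2 * Real.pi / 3) ^ (2 * s) * (2:ℝ) ^ (-(2 * (m:ℝ) * s)) := by
    have hh2 : h = (2 * Real.pi / 3) * ((2:ℝ) ^ m)⁻¹ := by
      rw [hh]; field_simp
    have h1 : (h ^ s) ^ 2 = h ^ (2 * s) := by
      rw [← Real.rpow_natCast (h ^ s) 2, ← Real.rpow_mul hhpos.le]
      congr 1
      push_cast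
      ring
    have h2 : ((2:ℝ) ^ m)⁻¹ = (2:ℝ) ^ (-(m:ℝ)) := by
      rw [← Real.rpow_natCast 2 m, ← Real.rpow_neg (by norm_num : (0:ℝ) ≤ 2)]
    rw [h1, hh2, Real.mul_rpow (by positivity) (by positivity), h2,
      ← Real.rpow_mul (by norm_num : (0:ℝ) ≤ 2)]
    congr 1
    ring
  have e3 : (2:ℝ) ^ (-(2 * (m:ℝ) * ρ)) * (2:ℝ) ^ (-(2 * (m:ℝ) * s))
      = (2:ℝ) ^ (-(2 * (m:ℝ) * (ρ + s))) := by
    rw [← Real.rpow_add (by norm_num)]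
    ring_nf
  have expand : (C * (2:ℝ) ^ (-((m:ℝ) * ρ))) ^ 2 * (3⁻¹ * (A * h ^ s) ^ 2)
      = (C ^ 2 * (2 * Real.pi / 3) ^ (2 * s) * 3⁻¹) * (2:ℝ) ^ (-(2 * (m:ℝ) * (ρ + s))) * A ^ 2 := by
    rw [mul_pow, mul_pow, e1, e2, ← e3]
    ring
  rw [expand]
  have hfac : C ^ 2 * (2 * Real.pi / 3) ^ (2 * s) * 3⁻¹ ≤ C ^ 2 * (2 * Real.pi / 3) ^ (2 * s) * 3 := by
    have hb : (0:ℝ) ≤ C ^ 2 * (2 * Real.pi / 3) ^ (2 * s) := by positivity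
    nlinarith
  have h2nn : (0:ℝ) ≤ (2:ℝ) ^ (-(2 * (m:ℝ) * (ρ + s))) := by positivity
  have hA2 : (0:ℝ) ≤ A ^ 2 := sq_nonneg A
  exact mul_le_mul_of_nonneg_right (mul_le_mul_of_nonneg_right hfac h2nn) hA2
end

section
/- Let 0 ≤ ρ ≤ 1 and let σ : ℤ → ℂ satisfy |σ(ξ)| ≤ C|ξ|^{-ρ} for ξ ≠ 0 and |σ(0)| ≤ C. Let r ∈ ℝ and s ∈ (0,1] with r + 1/2 - ρ ≤ s. Then there is a constant C' such that for every 2π-periodic Hölder continuous function f of order s: sup_{m∈ℕ} 2^{mr} · sup_{x∈[0,2π)} |∑_{2^m ≤ |ξ| < 2^{m+1}} σ(ξ) f̂(ξ) e^{ixξ}| ≤ C' · ‖f‖_{Λ^s}, where ‖f‖_{Λ^s} = sup_x |f(x)| + sup_{x,y, y≠0} |f(x-y)-f(x)|/|y|^s. -/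
set_option maxHeartbeats 1000000

open MeasureTheory Real Complex intervalIntegral AddCircle

lemma bessel_aux (g : ℝ → ℂ) (hg : Continuous g) (hper : Function.Periodic g (2 * Real.pi))
    (D : ℝ) (hD0 : 0 ≤ D) (hD : ∀ x, ‖g x‖ ≤ D) (S : Finset ℤ) :
    ∑ ξ ∈ S, (‖fourierCoef g ξ‖)^2 ≤ D^2 := by
  haveI : Fact (0 < 2 * Real.pi) := ⟨by positivity⟩
  let G : AddCircle (2 * Real.pi) → ℂ := hper.lift
  have hGcoe : ∀ x : ℝ, G (x : AddCircle (2 * Real.pi)) = g x := fun x => hper.lift_coe x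
  have hGcont : Continuous G := by
    exact continuous_coinduced_dom.mpr hg
  have hcoeff : ∀ ξ : ℤ, fourierCoeff G ξ = fourierCoef g ξ := by
    intro ξ
    rw [fourierCoeff_eq_intervalIntegral G ξ 0, fourierCoef, zero_add]
    have h1 : ∀ x : ℝ, (fourier (-ξ) (x : AddCircle (2 * Real.pi)) : ℂ) • G (x : AddCircle (2 * Real.pi))
        = g x * Complex.exp (-(Complex.I * (ξ:ℂ) * (x:ℂ))) := by
      intro x
      rw [smul_eq_mul, hGcoe, fourier_coe_apply, mul_comm]
      congr 1
      have hpine : (Real.pi : ℂ) ≠ 0 := by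
        exact_mod_cast Real.pi_ne_zero
      congr 1
      push_cast
      field_simp
    rw [intervalIntegral.integral_congr (g := fun x => g x * Complex.exp (-(Complex.I * (ξ:ℂ) * (x:ℂ)))) (fun x _ => h1 x)]
    rw [Complex.real_smul]
    push_cast
    have hpine : (Real.pi : ℂ) ≠ 0 := by exact_mod_cast Real.pi_ne_zero
    field_simp
  have hGbd : ∀ x : AddCircle (2 * Real.pi), ‖G x‖ ≤ D := by
    intro x
    induction x using QuotientAddGroup.induction_on with
    | H y => rw [hGcoe]; exact hD y
  have hGmem : MemLp G 2 haarAddCircle :=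
    MemLp.of_bound hGcont.aestronglyMeasurable D (Filter.Eventually.of_forall hGbd)
  have hFnorm : ‖hGmem.toLp G‖ ≤ D := by
    rw [Lp.norm_toLp]
    have h2 := eLpNorm_le_of_ae_bound (μ := (haarAddCircle : Measure (AddCircle (2 * Real.pi))))
      (p := 2) (f := G) (Filter.Eventually.of_forall hGbd)
    rw [measure_univ, ENNReal.one_rpow, one_mul] at h2
    calc (eLpNorm G 2 haarAddCircle).toReal ≤ (ENNReal.ofReal D).toReal :=
          ENNReal.toReal_mono ENNReal.ofReal_ne_top h2
      _ = D := ENNReal.toReal_ofReal hD0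
  have hrepr : ∀ ξ : ℤ, fourierBasis.repr (hGmem.toLp G) ξ = fourierCoef g ξ := by
    intro ξ
    rw [fourierBasis_repr, ← hcoeff ξ]
    unfold fourierCoeff
    exact integral_congr_ae ((hGmem.coeFn_toLp).mono (fun t ht => by simp only [ht]))
  have hbessel := fourierBasis.orthonormal.sum_inner_products_le (s := S) (hGmem.toLp G)
  calc ∑ ξ ∈ S, (‖fourierCoef g ξ‖)^2
      = ∑ ξ ∈ S, ‖(inner (𝕜 := ℂ) (fourierBasis ξ) (hGmem.toLp G) : ℂ)‖^2 := by
        refine Finset.sum_congr rfl (fun ξ _ => ?_)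
        rw [← fourierBasis.repr_apply_apply (hGmem.toLp G) ξ, hrepr ξ]
    _ ≤ ‖hGmem.toLp G‖^2 := hbessel
    _ ≤ D^2 := by nlinarith [norm_nonneg (hGmem.toLp G)]

lemma fourierCoef_shift (f : ℝ → ℂ) (hf : Continuous f)
    (hper : Function.Periodic f (2 * Real.pi)) (h : ℝ) (ξ : ℤ) :
    fourierCoef (fun x => f (x - h)) ξ
      = Complex.exp (-(Complex.I * (ξ:ℂ) * (h:ℂ))) * fourierCoef f ξ := by
  unfold fourierCoef
  set φ : ℝ → ℂ := fun u => f u * Complex.exp (-(Complex.I * (ξ:ℂ) * (u:ℂ))) with hφ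
  have hφper : Function.Periodic φ (2 * Real.pi) := by
    intro u
    simp only [hφ]
    rw [hper u]
    congr 1
    rw [show -(Complex.I * (ξ:ℂ) * ((u + 2 * Real.pi : ℝ) :ℂ))
        = -(Complex.I * (ξ:ℂ) * (u:ℂ)) + (-ξ : ℤ) * (2 * (Real.pi:ℂ) * Complex.I) by push_cast; ring,
      Complex.exp_add, Complex.exp_int_mul_two_pi_mul_I, mul_one]
  have key : ∀ x : ℝ, (fun x => f (x - h)) x * Complex.exp (-(Complex.I * (ξ:ℂ) * (x:ℂ)))
      = Complex.exp (-(Complex.I * (ξ:ℂ) * (h:ℂ))) * φ (x - h) := by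
    intro x
    simp only [hφ]
    have e2 : Complex.exp (-(Complex.I * (ξ:ℂ) * (h:ℂ))) * Complex.exp (-(Complex.I * (ξ:ℂ) * ((x - h : ℝ):ℂ)))
        = Complex.exp (-(Complex.I * (ξ:ℂ) * (x:ℂ))) := by
      rw [← Complex.exp_add]; congr 1; push_cast; ring
    rw [mul_left_comm, e2]
  have main : (∫ x in (0:ℝ)..(2 * Real.pi), (fun x => f (x - h)) x * Complex.exp (-(Complex.I * (ξ:ℂ) * (x:ℂ))))
      = Complex.exp (-(Complex.I * (ξ:ℂ) * (h:ℂ))) *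
        ∫ x in (0:ℝ)..(2 * Real.pi), φ x := by
    rw [intervalIntegral.integral_congr (fun x _ => key x),
      intervalIntegral.integral_const_mul]
    congr 1
    rw [intervalIntegral.integral_comp_sub_right φ h]
    have := hφper.intervalIntegral_add_eq (0 - h) 0
    rw [zero_sub, zero_add] at this
    rw [show (2 : ℝ) * Real.pi - h = -h + 2 * Real.pi by ring, zero_sub, this]
  rw [main]; ring

lemma exp_factor_lb {θ : ℝ} (h1 : Real.cos θ ≤ 0) :
    1 ≤ ‖Complex.exp (-(Complex.I * (θ:ℂ))) - 1‖ := by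
  have hre : (Complex.exp (-(Complex.I * (θ:ℂ))) - 1).re = Real.cos (-θ) - 1 := by
    rw [show -(Complex.I * (θ:ℂ)) = ((-θ : ℝ) : ℂ) * Complex.I by push_cast; ring,
      Complex.sub_re, Complex.exp_ofReal_mul_I_re, Complex.one_re]
  calc (1:ℝ) ≤ |(Complex.exp (-(Complex.I * (θ:ℂ))) - 1).re| := by
        rw [hre, Real.cos_neg, abs_of_nonpos (by nlinarith [Real.neg_one_le_cos θ])]
        linarith
    _ ≤ ‖Complex.exp (-(Complex.I * (θ:ℂ))) - 1‖ := Complex.abs_re_le_norm _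

theorem multiplier_holder_besov_infty (ρ C r s : ℝ)
    (hρ0 : 0 ≤ ρ) (hρ1 : ρ ≤ 1) (hs0 : 0 < s) (hs1 : s ≤ 1)
    (hrs : r + 1/2 - ρ ≤ s)
    (σ : ℤ → ℂ) (hσ : ∀ ξ : ℤ, ξ ≠ 0 → ‖σ ξ‖ ≤ C * |(ξ:ℝ)| ^ (-ρ))
    (hσ0 : ‖σ 0‖ ≤ C) :
    ∃ C' : ℝ, ∀ f : ℝ → ℂ, Continuous f → (∀ x, f (x + 2 * Real.pi) = f x) →
      ∀ A B : ℝ, (∀ x, ‖f x‖ ≤ A) →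
      (∀ x y : ℝ, ‖f (x - y) - f x‖ ≤ B * |y| ^ s) →
      ∀ m : ℕ, ∀ x ∈ Set.Ico (0:ℝ) (2 * Real.pi),
        (2:ℝ) ^ ((m:ℝ) * r) *
          ‖∑ ξ ∈ dyadicBlock m,
            σ ξ * fourierCoef f ξ * Complex.exp (Complex.I * (x:ℂ) * (ξ:ℂ))‖
        ≤ C' * (A + B) := by
  have hπ := Real.pi_pos
  have hC : 0 ≤ C := by
    have := hσ 1 one_ne_zero
    simpa using le_trans (norm_nonneg _) this
  refine ⟨12 * C, ?_⟩
  intro f hf hper A B hA hB m x _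
  have hper' : Function.Periodic f (2 * Real.pi) := hper
  have hB0 : 0 ≤ B := by
    have := hB 0 1
    simpa using le_trans (norm_nonneg _) this
  -- the shift
  set h : ℝ := 2 * Real.pi / (3 * 2 ^ m) with hh
  have hhpos : 0 < h := by positivity
  -- the difference function
  set g : ℝ → ℂ := fun u => f (u - h) - f u with hg
  have hgc : Continuous g := (hf.comp (continuous_sub_right h)).sub hf
  have hgper : Function.Periodic g (2 * Real.pi) := by
    intro u
    simp only [hg]
    rw [show u + 2 * Real.pi - h = (u - h) + 2 * Real.pi by ring, hper, hper]
  set D : ℝ := B * h ^ s with hD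
  have hD0 : 0 ≤ D := by
    apply mul_nonneg hB0 (Real.rpow_nonneg hhpos.le s)
  have hgbd : ∀ u, ‖g u‖ ≤ D := by
    intro u
    simpa [hD, abs_of_pos hhpos] using hB u h
  -- Fourier coefficient comparison on the block
  have hcoef : ∀ ξ ∈ dyadicBlock m,
      ‖fourierCoef f ξ‖ ≤ ‖fourierCoef g ξ‖ := by
    intro ξ hξ
    obtain ⟨-, h1, h2⟩ := Finset.mem_filter.mp hξ
    have hsplit : fourierCoef g ξ
        = (Complex.exp (-(Complex.I * (ξ:ℂ) * (h:ℂ))) - 1) * fourierCoef f ξ := by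
      have hint1 : IntervalIntegrable
          (fun u : ℝ => f (u - h) * Complex.exp (-(Complex.I * (ξ:ℂ) * (u:ℂ))))
          volume 0 (2 * Real.pi) :=
        ((hf.comp (continuous_sub_right h)).mul (by fun_prop)).intervalIntegrable _ _
      have hint2 : IntervalIntegrable
          (fun u : ℝ => f u * Complex.exp (-(Complex.I * (ξ:ℂ) * (u:ℂ))))
          volume 0 (2 * Real.pi) :=
        (hf.mul (by fun_prop)).intervalIntegrable _ _
      have : fourierCoef g ξ = fourierCoef (fun u => f (u - h)) ξ - fourierCoef f ξ := by
        unfold fourierCoef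
        rw [← mul_sub, ← intervalIntegral.integral_sub hint1 hint2]
        congr 1
        apply intervalIntegral.integral_congr
        intro u _
        simp only [hg]
        ring
      rw [this, fourierCoef_shift f hf hper' h ξ]
      ring
    have hfac : 1 ≤ ‖Complex.exp (-(Complex.I * (ξ:ℂ) * (h:ℂ))) - 1‖ := by
      have hcast : Complex.I * (ξ:ℂ) * (h:ℂ) = Complex.I * (((ξ:ℝ) * h : ℝ) : ℂ) := by
        push_cast; ring
      rw [hcast]
      apply exp_factor_lb
      rw [← Real.cos_abs, abs_mul, abs_of_pos hhpos]
      apply Real.cos_nonpos_of_pi_div_two_le_of_le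
      · -- π/2 ≤ |ξ| * h ; indeed  2π/3 ≤ |ξ| h
        have h1' : (2:ℝ)^m ≤ |(ξ:ℝ)| := by
          rw [← Int.cast_abs]; exact_mod_cast h1
        have : (2:ℝ)^m * h ≤ |(ξ:ℝ)| * h := by
          exact mul_le_mul_of_nonneg_right h1' hhpos.le
        have hval : (2:ℝ)^m * h = 2 * Real.pi / 3 := by
          rw [hh]; field_simp
        nlinarith
      · have h2' : |(ξ:ℝ)| ≤ 2^(m+1) := by
          rw [← Int.cast_abs]; exact_mod_cast h2.le
        have : |(ξ:ℝ)| * h ≤ 2^(m+1) * h := by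
          exact mul_le_mul_of_nonneg_right h2' hhpos.le
        have hval : (2:ℝ)^(m+1) * h = 4 * Real.pi / 3 := by
          rw [hh, pow_succ]; field_simp; ring
        nlinarith
    calc ‖fourierCoef f ξ‖
        ≤ ‖Complex.exp (-(Complex.I * (ξ:ℂ) * (h:ℂ))) - 1‖ *
            ‖fourierCoef f ξ‖ := by
          nlinarith [norm_nonneg (fourierCoef f ξ)]
      _ = ‖fourierCoef g ξ‖ := by rw [hsplit, norm_mul]
  -- bound on σ on the block
  set P : ℝ := C * (2:ℝ) ^ ((m:ℝ) * (-ρ)) with hP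
  have hσbd : ∀ ξ ∈ dyadicBlock m, ‖σ ξ‖ ≤ P := by
    intro ξ hξ
    obtain ⟨-, h1, -⟩ := Finset.mem_filter.mp hξ
    have hξ0 : ξ ≠ 0 := by
      intro h0; rw [h0] at h1; simp at h1
      exact (pow_pos (by norm_num : (0:ℤ) < 2) m).not_ge h1
    refine (hσ ξ hξ0).trans ?_
    have h1' : (2:ℝ)^m ≤ |(ξ:ℝ)| := by
      rw [← Int.cast_abs]; exact_mod_cast h1
    have : |(ξ:ℝ)| ^ (-ρ) ≤ ((2:ℝ)^m) ^ (-ρ) :=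
      Real.rpow_le_rpow_of_nonpos (by positivity) h1' (by linarith)
    refine (mul_le_mul_of_nonneg_left this hC).trans_eq ?_
    rw [hP, ← Real.rpow_natCast 2 m, ← Real.rpow_mul (by norm_num)]
  -- Cauchy-Schwarz + Bessel
  set K : ℝ := (2:ℝ) ^ (((m:ℝ) + 3)/2) with hK
  have hsum2 : ∑ ξ ∈ dyadicBlock m, (‖fourierCoef g ξ‖)^2 ≤ D^2 :=
    bessel_aux g hgc hgper D hD0 hgbd _
  have hcard : ((dyadicBlock m).card : ℝ) ≤ (2:ℝ) ^ ((m:ℝ) + 3) := by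
    have hc1 : (dyadicBlock m).card ≤ (Finset.Icc (-(2^(m+1) : ℤ)) (2^(m+1))).card :=
      Finset.card_filter_le _ _
    rw [Int.card_Icc] at hc1
    have hc2 : (dyadicBlock m).card ≤ 2^(m+3) := by
      refine hc1.trans ?_
      rw [show (2:ℤ)^(m+1) + 1 - (-(2^(m+1))) = ((2^(m+2) + 1 : ℕ) : ℤ) by push_cast; ring,
        Int.toNat_natCast]
      have h1 : (1:ℕ) ≤ 2^(m+2) := Nat.one_le_two_pow
      have h2 : (2:ℕ)^(m+3) = 2^(m+2) * 2 := by rw [pow_succ]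
      omega
    calc ((dyadicBlock m).card : ℝ) ≤ ((2:ℕ)^(m+3) : ℝ) := by exact_mod_cast hc2
      _ = (2:ℝ) ^ ((m:ℝ) + 3) := by
        push_cast
        rw [← Real.rpow_natCast 2 (m+3)]
        push_cast; ring_nf
  have hCS : ∑ ξ ∈ dyadicBlock m, ‖fourierCoef g ξ‖ ≤ K * D := by
    have hsq := sq_sum_le_card_mul_sum_sq (s := dyadicBlock m)
      (f := fun ξ => ‖fourierCoef g ξ‖)
    have hKD : (∑ ξ ∈ dyadicBlock m, ‖fourierCoef g ξ‖)^2 ≤ (K * D)^2 := by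
      have hK2 : K^2 = (2:ℝ) ^ ((m:ℝ) + 3) := by
        rw [hK, ← Real.rpow_natCast ((2:ℝ) ^ (((m:ℝ) + 3)/2)) 2,
          ← Real.rpow_mul (by norm_num)]
        norm_num
      have : ((dyadicBlock m).card : ℝ) * ∑ ξ ∈ dyadicBlock m, (‖fourierCoef g ξ‖)^2
          ≤ (2:ℝ) ^ ((m:ℝ) + 3) * D^2 := by
        apply mul_le_mul hcard hsum2 (Finset.sum_nonneg (fun ξ _ => by positivity)) (by positivity)
      calc (∑ ξ ∈ dyadicBlock m, ‖fourierCoef g ξ‖)^2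
          ≤ ((dyadicBlock m).card : ℝ) * ∑ ξ ∈ dyadicBlock m, (‖fourierCoef g ξ‖)^2 := hsq
        _ ≤ (2:ℝ) ^ ((m:ℝ) + 3) * D^2 := this
        _ = K^2 * D^2 := by rw [hK2]
        _ = (K * D)^2 := (mul_pow K D 2).symm
    have hs1' : 0 ≤ ∑ ξ ∈ dyadicBlock m, ‖fourierCoef g ξ‖ :=
      Finset.sum_nonneg (fun ξ _ => norm_nonneg _)
    have hKD0 : 0 ≤ K * D := by positivity
    nlinarith
  -- main chain
  have habsexp : ∀ ξ : ℤ, ‖Complex.exp (Complex.I * (x:ℂ) * (ξ:ℂ))‖ = 1 := by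
    intro ξ
    rw [show Complex.I * (x:ℂ) * (ξ:ℂ) = ((x * ξ : ℝ) : ℂ) * Complex.I by push_cast; ring]
    exact Complex.norm_exp_ofReal_mul_I _
  have hS : ‖∑ ξ ∈ dyadicBlock m,
        σ ξ * fourierCoef f ξ * Complex.exp (Complex.I * (x:ℂ) * (ξ:ℂ))‖
      ≤ P * (K * D) := by
    calc ‖∑ ξ ∈ dyadicBlock m,
          σ ξ * fourierCoef f ξ * Complex.exp (Complex.I * (x:ℂ) * (ξ:ℂ))‖
        ≤ ∑ ξ ∈ dyadicBlock m, ‖σ ξ * fourierCoef f ξ *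
            Complex.exp (Complex.I * (x:ℂ) * (ξ:ℂ))‖ := norm_sum_le _ _
      _ ≤ ∑ ξ ∈ dyadicBlock m, P * ‖fourierCoef g ξ‖ := by
          refine Finset.sum_le_sum (fun ξ hξ => ?_)
          rw [norm_mul, norm_mul, habsexp, mul_one]
          exact mul_le_mul (hσbd ξ hξ) (hcoef ξ hξ) (norm_nonneg _)
            (le_trans (norm_nonneg _) (hσbd ξ hξ))
      _ = P * ∑ ξ ∈ dyadicBlock m, ‖fourierCoef g ξ‖ := by
          rw [Finset.mul_sum]
      _ ≤ P * (K * D) := by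
          refine mul_le_mul_of_nonneg_left hCS ?_
          rw [hP]; positivity
  -- final numerics
  have hhs : h ^ s ≤ 3 * (2:ℝ) ^ (-(m:ℝ) * s) := by
    have hle : h ≤ 3 * (2:ℝ) ^ (-(m:ℝ)) := by
      rw [hh, Real.rpow_neg (by norm_num), ← Real.rpow_natCast 2 m]
      rw [div_le_iff₀ (by positivity)]
      have : (2:ℝ) ^ ((m:ℝ)) * ((2:ℝ) ^ ((m:ℝ)))⁻¹ = 1 := by
        field_simp
      nlinarith [Real.pi_le_four, Real.rpow_pos_of_pos (by norm_num : (0:ℝ) < 2) (m:ℝ)]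
    calc h ^ s ≤ (3 * (2:ℝ) ^ (-(m:ℝ))) ^ s :=
          Real.rpow_le_rpow hhpos.le hle hs0.le
      _ = 3 ^ s * ((2:ℝ) ^ (-(m:ℝ))) ^ s := Real.mul_rpow (by norm_num) (by positivity)
      _ ≤ 3 * (2:ℝ) ^ (-(m:ℝ) * s) := by
          rw [← Real.rpow_mul (by norm_num)]
          have : (3:ℝ) ^ s ≤ 3 := by
            calc (3:ℝ) ^ s ≤ (3:ℝ) ^ (1:ℝ) :=
                Real.rpow_le_rpow_of_exponent_le (by norm_num) hs1
              _ = 3 := Real.rpow_one 3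
          have h20 : (0:ℝ) < (2:ℝ) ^ (-(m:ℝ) * s) := by positivity
          nlinarith
  -- combine the powers of two
  have hpow : (2:ℝ) ^ ((m:ℝ) * r) * ((2:ℝ) ^ ((m:ℝ) * (-ρ)) * ((2:ℝ) ^ (((m:ℝ) + 3)/2) *
      (2:ℝ) ^ (-(m:ℝ) * s))) ≤ 4 := by
    rw [← Real.rpow_add (by norm_num), ← Real.rpow_add (by norm_num),
      ← Real.rpow_add (by norm_num)]
    calc (2:ℝ) ^ ((m:ℝ) * r + ((m:ℝ) * (-ρ) + (((m:ℝ) + 3)/2 + -(m:ℝ) * s)))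
        ≤ (2:ℝ) ^ (2:ℝ) := by
          apply Real.rpow_le_rpow_of_exponent_le (by norm_num)
          have hm : (0:ℝ) ≤ (m:ℝ) := Nat.cast_nonneg m
          nlinarith
      _ = 4 := by
          have : (2:ℝ) ^ (2:ℝ) = (2:ℝ) ^ (2:ℕ) := by
            rw [← Real.rpow_natCast 2 2]; norm_num
          rw [this]; norm_num
  calc (2:ℝ) ^ ((m:ℝ) * r) * ‖∑ ξ ∈ dyadicBlock m,
        σ ξ * fourierCoef f ξ * Complex.exp (Complex.I * (x:ℂ) * (ξ:ℂ))‖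
      ≤ (2:ℝ) ^ ((m:ℝ) * r) * (P * (K * D)) :=
        mul_le_mul_of_nonneg_left hS (by positivity)
    _ ≤ 12 * C * B := by
        rw [hP, hK, hD]
        have hexp : (0:ℝ) < (2:ℝ) ^ ((m:ℝ) * r) := by positivity
        have hhs' := hhs
        -- rearrange
        have : (2:ℝ) ^ ((m:ℝ) * r) * (C * (2:ℝ) ^ ((m:ℝ) * (-ρ)) *
            ((2:ℝ) ^ (((m:ℝ) + 3)/2) * (B * h ^ s)))
            = (C * B) * ((2:ℝ) ^ ((m:ℝ) * r) * ((2:ℝ) ^ ((m:ℝ) * (-ρ)) *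
              ((2:ℝ) ^ (((m:ℝ) + 3)/2) * h ^ s))) := by ring
        rw [this]
        have hstep : (2:ℝ) ^ ((m:ℝ) * r) * ((2:ℝ) ^ ((m:ℝ) * (-ρ)) *
            ((2:ℝ) ^ (((m:ℝ) + 3)/2) * h ^ s)) ≤ 12 := by
          have hmono : (2:ℝ) ^ ((m:ℝ) * r) * ((2:ℝ) ^ ((m:ℝ) * (-ρ)) *
              ((2:ℝ) ^ (((m:ℝ) + 3)/2) * h ^ s))
              ≤ (2:ℝ) ^ ((m:ℝ) * r) * ((2:ℝ) ^ ((m:ℝ) * (-ρ)) *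
              ((2:ℝ) ^ (((m:ℝ) + 3)/2) * (3 * (2:ℝ) ^ (-(m:ℝ) * s)))) := by
            have := hhs
            gcongr
          refine hmono.trans ?_
          have h3 : (2:ℝ) ^ ((m:ℝ) * r) * ((2:ℝ) ^ ((m:ℝ) * (-ρ)) *
              ((2:ℝ) ^ (((m:ℝ) + 3)/2) * (3 * (2:ℝ) ^ (-(m:ℝ) * s))))
              = 3 * ((2:ℝ) ^ ((m:ℝ) * r) * ((2:ℝ) ^ ((m:ℝ) * (-ρ)) *
              ((2:ℝ) ^ (((m:ℝ) + 3)/2) * (2:ℝ) ^ (-(m:ℝ) * s)))) := by ring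
          rw [h3]
          nlinarith [hpow]
        have hCB : 0 ≤ C * B := mul_nonneg hC hB0
        nlinarith [hstep, hCB, mul_le_mul_of_nonneg_left hstep hCB]
    _ ≤ 12 * C * (A + B) := by
        have hA0 : 0 ≤ A := le_trans (norm_nonneg _) (hA 0)
        nlinarith
    _ = 12 * C * (A + B) := rfl
end

section
/- Let 0 ≤ ρ ≤ 1, σ : ℤ → ℂ with |σ(ξ)| ≤ C|ξ|^{-ρ} for ξ ≠ 0, let q ∈ (0,∞), r ∈ ℝ, and s ∈ (0,1] with r + 1/2 - ρ < s. Then there is a constant C' such that for every 2π-periodic Hölder continuous f of order s: (∑_{m=0}^{∞} 2^{mrq} · (sup_x |∑_{2^m ≤ |ξ| < 2^{m+1}} σ(ξ) f̂(ξ) e^{ixξ}|)^q)^{1/q} ≤ C' ‖f‖_{Λ^s}. -/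
set_option maxHeartbeats 1000000

open MeasureTheory Real Complex AddCircle
open scoped InnerProductSpace

namespace MHBaux

instance : Fact (0 < 2 * π) := ⟨by positivity⟩

theorem fourierCoef_eq (f : ℝ → ℂ) (hp : Function.Periodic f (2*π)) (ξ : ℤ) :
    fourierCoeff hp.lift ξ = fourierCoef f ξ := by
  rw [fourierCoeff_eq_intervalIntegral _ _ 0, fourierCoef, zero_add]
  have : ∀ x : ℝ, (fourier (-ξ)) (x : AddCircle (2*π)) • hp.lift (x : AddCircle (2*π))
      = f x * Complex.exp (-(Complex.I * (ξ:ℂ) * (x:ℂ))) := by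
    intro x
    rw [fourier_coe_apply, hp.lift_coe, smul_eq_mul, mul_comm]
    congr 2
    push_cast
    have h2π : (2*π : ℂ) ≠ 0 := by
      simp [Real.pi_ne_zero, Complex.ofReal_ne_zero]
    field_simp
  simp_rw [this]
  rw [Complex.real_smul]
  push_cast
  ring

theorem bessel (g : ℝ → ℂ) (hc : Continuous g) (hp : Function.Periodic g (2*π))
    (M : ℝ) (hM0 : 0 ≤ M) (hM : ∀ x, ‖g x‖ ≤ M) (S : Finset ℤ) :
    ∑ ξ ∈ S, (‖fourierCoef g ξ‖)^2 ≤ M^2 := by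
  set G : C(AddCircle (2*π), ℂ) := ⟨hp.lift, hc.quotient_liftOn' _⟩ with hG
  set F : Lp ℂ 2 (@haarAddCircle (2*π) _) := ContinuousMap.toLp 2 haarAddCircle ℂ G with hF
  have hcoef : ∀ ξ : ℤ, fourierCoeff (F : AddCircle (2*π) → ℂ) ξ = fourierCoef g ξ := by
    intro ξ
    rw [hF, fourierCoeff_toLp]
    exact fourierCoef_eq g hp ξ
  have hbound : ∀ x : AddCircle (2*π), ‖G x‖ ≤ M := by
    intro x
    induction x using QuotientAddGroup.induction_on with
    | H z => exact hM z
  have hnormF : ‖F‖ ≤ M := by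
    rw [Lp.norm_def]
    have h1 : eLpNorm (F : AddCircle (2*π) → ℂ) 2 haarAddCircle
        = eLpNorm (G : AddCircle (2*π) → ℂ) 2 haarAddCircle :=
      eLpNorm_congr_ae (ContinuousMap.coeFn_toLp (p := 2) (𝕜 := ℂ) haarAddCircle G)
    have h2 : eLpNorm (G : AddCircle (2*π) → ℂ) 2 haarAddCircle ≤ ENNReal.ofReal M := by
      have := eLpNorm_le_of_ae_bound (μ := (haarAddCircle : Measure (AddCircle (2*π))))
        (p := 2) (f := (G : AddCircle (2*π) → ℂ)) (.of_forall hbound)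
      simpa using this
    rw [h1]
    calc (eLpNorm (G : AddCircle (2*π) → ℂ) 2 haarAddCircle).toReal
        ≤ (ENNReal.ofReal M).toReal := ENNReal.toReal_mono ENNReal.ofReal_ne_top h2
      _ = M := ENNReal.toReal_ofReal hM0
  have horth := (@fourierBasis (2*π) _).orthonormal.sum_inner_products_le (s := S) F
  have hrepr : ∀ ξ : ℤ, ⟪(fourierBasis (T := 2*π)) ξ, F⟫_ℂ = fourierCoef g ξ := by
    intro ξ
    rw [← HilbertBasis.repr_apply_apply, fourierBasis_repr]
    exact hcoef ξ
  calc ∑ ξ ∈ S, (‖fourierCoef g ξ‖)^2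
      = ∑ ξ ∈ S, ‖⟪(fourierBasis (T := 2*π)) ξ, F⟫_ℂ‖^2 := by
        refine Finset.sum_congr rfl fun ξ _ => ?_
        rw [hrepr ξ]
    _ ≤ ‖F‖^2 := horth
    _ ≤ M^2 := by nlinarith [norm_nonneg F]

theorem exp_periodic (ξ : ℤ) : Function.Periodic
    (fun u : ℝ => Complex.exp (-(Complex.I * (ξ:ℂ) * (u:ℂ)))) (2*π) := by
  intro u
  simp only
  have harg : -(Complex.I * (ξ:ℂ) * (((u + 2*π : ℝ)):ℂ))
      = -(Complex.I * ξ * (u:ℂ)) + ((-ξ : ℤ):ℂ) * (2*(π:ℂ)*Complex.I) := by push_cast; ring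
  rw [harg, Complex.exp_add, Complex.exp_int_mul_two_pi_mul_I, mul_one]

theorem coef_shift (f : ℝ → ℂ) (hp : Function.Periodic f (2*π)) (h : ℝ) (ξ : ℤ) :
    fourierCoef (fun x => f (x - h)) ξ
      = Complex.exp (-(Complex.I * (ξ:ℂ) * (h:ℂ))) * fourierCoef f ξ := by
  unfold fourierCoef
  have key : ∀ x : ℝ, f (x - h) * Complex.exp (-(Complex.I * ξ * (x:ℂ)))
      = Complex.exp (-(Complex.I * ξ * (h:ℂ))) *
        (f (x - h) * Complex.exp (-(Complex.I * ξ * ((x - h : ℝ):ℂ)))) := by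
    intro x
    have : Complex.exp (-(Complex.I * ξ * (x:ℂ)))
        = Complex.exp (-(Complex.I * ξ * ((x - h : ℝ):ℂ))) * Complex.exp (-(Complex.I * ξ * (h:ℂ))) := by
      rw [← Complex.exp_add]
      congr 1
      push_cast
      ring
    rw [this]
    ring
  simp_rw [key]
  rw [intervalIntegral.integral_const_mul]
  have hFper : Function.Periodic (fun u : ℝ => f u * Complex.exp (-(Complex.I * ξ * (u:ℂ)))) (2*π) := by
    intro u
    simp only
    rw [hp u, show Complex.exp (-(Complex.I * ξ * (((u + 2*π:ℝ)):ℂ)))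
      = Complex.exp (-(Complex.I * ξ * (u:ℂ))) from exp_periodic ξ u]
  have sub : (∫ x in (0:ℝ)..(2*π), f (x - h) * Complex.exp (-(Complex.I * ξ * ((x - h:ℝ):ℂ))))
      = ∫ x in (0:ℝ)..(2*π), f x * Complex.exp (-(Complex.I * ξ * (x:ℂ))) := by
    rw [intervalIntegral.integral_comp_sub_right
      (fun u : ℝ => f u * Complex.exp (-(Complex.I * ξ * (u:ℂ)))) h]
    have := hFper.intervalIntegral_add_eq (-h) 0
    simpa [zero_sub, sub_eq_add_neg, add_comm] using this
  rw [sub]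
  ring

theorem coef_diff (f : ℝ → ℂ) (hc : Continuous f) (hp : Function.Periodic f (2*π)) (h : ℝ) (ξ : ℤ) :
    fourierCoef (fun x => f (x - h) - f x) ξ
      = (Complex.exp (-(Complex.I * (ξ:ℂ) * (h:ℂ))) - 1) * fourierCoef f ξ := by
  have hce : Continuous fun x : ℝ => Complex.exp (-(Complex.I * (ξ:ℂ) * (x:ℂ))) := by
    fun_prop
  have h1 : IntervalIntegrable (fun x : ℝ => f (x - h) * Complex.exp (-(Complex.I * (ξ:ℂ) * (x:ℂ))))
      volume 0 (2*π) := ((hc.comp (continuous_id.sub continuous_const)).mul hce).intervalIntegrable _ _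
  have h2 : IntervalIntegrable (fun x : ℝ => f x * Complex.exp (-(Complex.I * (ξ:ℂ) * (x:ℂ))))
      volume 0 (2*π) := (hc.mul hce).intervalIntegrable _ _
  unfold fourierCoef
  simp_rw [sub_mul]
  rw [intervalIntegral.integral_sub h1 h2]
  have hshift : ((1 / (2 * (π:ℂ))) * ∫ x in (0:ℝ)..(2*π), f (x - h) * Complex.exp (-(Complex.I * (ξ:ℂ) * (x:ℂ))))
      = Complex.exp (-(Complex.I * (ξ:ℂ) * (h:ℂ))) *
        ((1 / (2 * (π:ℂ))) * ∫ x in (0:ℝ)..(2*π), f x * Complex.exp (-(Complex.I * (ξ:ℂ) * (x:ℂ)))) := by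
    have := coef_shift f hp h ξ
    unfold fourierCoef at this
    simpa using this
  linear_combination hshift

theorem exp_lower (θ : ℝ) (h1 : π/2 ≤ |θ|) (h2 : |θ| ≤ π) :
    1 ≤ ‖Complex.exp ((θ:ℂ) * Complex.I) - 1‖ := by
  have hz : Complex.exp ((θ:ℂ) * Complex.I) - 1
      = ((Real.cos θ - 1 : ℝ):ℂ) + ((Real.sin θ : ℝ):ℂ) * Complex.I := by
    rw [Complex.exp_mul_I, ← Complex.ofReal_cos, ← Complex.ofReal_sin]
    push_cast
    ring
  have habs2 : (‖Complex.exp ((θ:ℂ) * Complex.I) - 1‖)^2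
      = 2 - 2 * Real.cos θ := by
    rw [hz, Complex.sq_norm, Complex.normSq_add_mul_I]
    nlinarith [Real.sin_sq_add_cos_sq θ]
  have hcos : Real.cos θ ≤ 0 := by
    rw [← Real.cos_abs]
    exact Real.cos_nonpos_of_pi_div_two_le_of_le h1 (by linarith [Real.pi_pos])
  nlinarith [norm_nonneg (Complex.exp ((θ:ℂ) * Complex.I) - 1)]

end MHBaux

open MHBaux in
theorem multiplier_holder_besov_q (ρ C r s q : ℝ)
    (hρ0 : 0 ≤ ρ) (hρ1 : ρ ≤ 1) (hs0 : 0 < s) (hs1 : s ≤ 1) (hq : 0 < q)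
    (hrs : r + 1/2 - ρ < s)
    (σ : ℤ → ℂ) (hσ : ∀ ξ : ℤ, ξ ≠ 0 → ‖σ ξ‖ ≤ C * |(ξ:ℝ)| ^ (-ρ)) :
    ∃ C' : ℝ, ∀ f : ℝ → ℂ, Continuous f → (∀ x, f (x + 2 * Real.pi) = f x) →
      ∀ A B : ℝ, (∀ x, ‖f x‖ ≤ A) →
      (∀ x y : ℝ, ‖f (x - y) - f x‖ ≤ B * |y| ^ s) →
      (∑' m : ℕ, (2:ℝ) ^ ((m:ℝ) * r * q) *
          (⨆ x ∈ Set.Ico (0:ℝ) (2 * Real.pi),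
            ‖∑ ξ ∈ dyadicBlock m,
              σ ξ * fourierCoef f ξ * Complex.exp (Complex.I * (x:ℂ) * (ξ:ℂ))‖) ^ q) ^ (1/q)
        ≤ C' * (A + B) := by
  have hπ1 : (1:ℝ) ≤ π := by linarith [Real.pi_gt_three]
  have hC : 0 ≤ C := by
    have := hσ 1 one_ne_zero
    simp at this
    exact le_trans (norm_nonneg _) this
  set δ : ℝ := 1/2 - ρ - s with hδ
  set t : ℝ := (2:ℝ) ^ ((r + δ) * q) with ht
  have ht0 : 0 < t := Real.rpow_pos_of_pos two_pos _
  have ht1 : t < 1 := by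
    apply Real.rpow_lt_one_of_one_lt_of_neg one_lt_two
    have : r + δ < 0 := by simp only [hδ]; linarith
    exact mul_neg_of_neg_of_pos this hq
  set K : ℝ := 3 * π * C with hK
  have hK0 : 0 ≤ K := by rw [hK]; exact mul_nonneg (by positivity) hC
  set G : ℝ := ((1 - t)⁻¹) ^ (1/q) with hG
  have hG0 : 0 ≤ G := Real.rpow_nonneg (inv_nonneg.mpr (by linarith)) _
  refine ⟨K * G, ?_⟩
  intro f hfc hfper A B hA hB
  have hper : Function.Periodic f (2*π) := hfper
  have hA0 : 0 ≤ A := le_trans (norm_nonneg _) (hA 0)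
  have hB0 : 0 ≤ B := by
    have := hB 0 1
    simp at this
    exact le_trans (norm_nonneg _) this
  -- key per-block estimate
  have key : ∀ m : ℕ,
      (⨆ x ∈ Set.Ico (0:ℝ) (2 * Real.pi),
          ‖∑ ξ ∈ dyadicBlock m,
            σ ξ * fourierCoef f ξ * Complex.exp (Complex.I * (x:ℂ) * (ξ:ℂ))‖)
        ≤ K * B * (2:ℝ) ^ ((m:ℝ) * δ) := by
    intro m
    set h : ℝ := π / 2^(m+1) with hh
    have hh0 : 0 < h := by rw [hh]; positivity
    set g : ℝ → ℂ := fun x => f (x - h) - f x with hg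
    have hgc : Continuous g := (hfc.comp (continuous_id.sub continuous_const)).sub hfc
    have hgper : Function.Periodic g (2*π) := by
      intro x
      simp only [hg]
      rw [show x + 2*π - h = (x - h) + 2*π by ring, hper (x - h), hper x]
    set M : ℝ := B * h ^ s with hM
    have hM0 : 0 ≤ M := mul_nonneg hB0 (Real.rpow_nonneg hh0.le _)
    have hMb : ∀ x, ‖g x‖ ≤ M := by
      intro x
      have := hB x h
      rwa [abs_of_pos hh0] at this
    -- coefficient comparison
    have hfg : ∀ ξ ∈ dyadicBlock m,
        ‖fourierCoef f ξ‖ ≤ ‖fourierCoef g ξ‖ := by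
      intro ξ hξ
      obtain ⟨hmem, hlo, hhi⟩ := by
        simpa [dyadicBlock, Finset.mem_filter] using hξ
      have hcoef := coef_diff f hfc hper h ξ
      have hexp : 1 ≤ ‖Complex.exp (-(Complex.I * (ξ:ℂ) * (h:ℂ))) - 1‖ := by
        have harg : -(Complex.I * (ξ:ℂ) * (h:ℂ)) = ((-(ξ:ℝ) * h : ℝ) : ℂ) * Complex.I := by
          push_cast; ring
        rw [harg]
        apply exp_lower
        · have h1 : ((2:ℝ)^m) ≤ |(ξ:ℝ)| := by
            have : ((2^m : ℤ) : ℝ) ≤ ((|ξ| : ℤ) : ℝ) := by exact_mod_cast hlo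
            simpa [Int.cast_abs] using this
          have : |(-(ξ:ℝ) * h)| = |(ξ:ℝ)| * h := by
            rw [abs_mul, abs_neg, abs_of_pos hh0]
          rw [this, hh]
          have heq : (2:ℝ)^m * (π / 2^(m+1)) = π/2 := by
            rw [pow_succ]
            field_simp
          calc π/2 = (2:ℝ)^m * (π / 2^(m+1)) := heq.symm
            _ ≤ |(ξ:ℝ)| * (π / 2^(m+1)) := mul_le_mul_of_nonneg_right h1 (by positivity)
        · have h2 : |(ξ:ℝ)| ≤ (2:ℝ)^(m+1) := by
            have : ((|ξ| : ℤ) : ℝ) ≤ ((2^(m+1) : ℤ) : ℝ) := by exact_mod_cast hhi.le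
            simpa [Int.cast_abs] using this
          have : |(-(ξ:ℝ) * h)| = |(ξ:ℝ)| * h := by
            rw [abs_mul, abs_neg, abs_of_pos hh0]
          rw [this, hh]
          calc |(ξ:ℝ)| * (π / 2^(m+1))
              ≤ (2:ℝ)^(m+1) * (π / 2^(m+1)) :=
                mul_le_mul_of_nonneg_right h2 (by positivity)
            _ = π := by field_simp
      calc ‖fourierCoef f ξ‖
          = 1 * ‖fourierCoef f ξ‖ := (one_mul _).symm
        _ ≤ ‖Complex.exp (-(Complex.I * (ξ:ℂ) * (h:ℂ))) - 1‖
              * ‖fourierCoef f ξ‖ :=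
            mul_le_mul_of_nonneg_right hexp (norm_nonneg _)
        _ = ‖fourierCoef g ξ‖ := by rw [hg, hcoef, norm_mul]
    -- Bessel + Cauchy–Schwarz
    have hbes := bessel g hgc hgper M hM0 hMb (dyadicBlock m)
    have hcardle : ((dyadicBlock m).card : ℝ) ≤ (2:ℝ)^(m+3) := by
      have h1 : (dyadicBlock m).card ≤ (Finset.Icc (-(2^(m+1) : ℤ)) (2^(m+1))).card :=
        Finset.card_filter_le _ _
      have h2 : (Finset.Icc (-(2^(m+1) : ℤ)) (2^(m+1))).card = (2^(m+2) + 1 : ℤ).toNat := by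
        rw [Int.card_Icc]
        congr 1
        ring
      have h3 : ((2^(m+2) + 1 : ℤ).toNat : ℤ) ≤ (2:ℤ)^(m+3) := by
        rw [Int.toNat_of_nonneg (by positivity)]
        have : (1:ℤ) ≤ 2^(m+2) := by exact_mod_cast Nat.one_le_two_pow
        calc (2:ℤ)^(m+2) + 1 ≤ 2^(m+2) + 2^(m+2) := by linarith
          _ = 2^(m+3) := by ring
      have : (dyadicBlock m).card ≤ (2:ℕ)^(m+3) := by
        refine h1.trans ?_
        rw [h2]
        exact_mod_cast h3
      calc ((dyadicBlock m).card : ℝ) ≤ ((2:ℕ)^(m+3) : ℕ) := by exact_mod_cast this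
        _ = (2:ℝ)^(m+3) := by push_cast; ring
    set Sg : ℝ := ∑ ξ ∈ dyadicBlock m, ‖fourierCoef g ξ‖ with hSg
    have hSg0 : 0 ≤ Sg := Finset.sum_nonneg fun ξ _ => norm_nonneg _
    have hCS : Sg^2 ≤ ((dyadicBlock m).card : ℝ) * ∑ ξ ∈ dyadicBlock m,
        (‖fourierCoef g ξ‖)^2 := by
      exact_mod_cast sq_sum_le_card_mul_sum_sq (s := dyadicBlock m)
        (f := fun ξ => ‖fourierCoef g ξ‖)
    have hSgle : Sg ≤ 3 * (2:ℝ) ^ ((m:ℝ) * (1/2)) * M := by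
      have hsq : Sg^2 ≤ (2:ℝ)^(m+3) * M^2 := by
        calc Sg^2 ≤ ((dyadicBlock m).card : ℝ) * ∑ ξ ∈ dyadicBlock m,
              (‖fourierCoef g ξ‖)^2 := hCS
          _ ≤ (2:ℝ)^(m+3) * M^2 := by
            apply mul_le_mul hcardle hbes (Finset.sum_nonneg fun ξ _ => sq_nonneg _)
              (by positivity)
      have hrhs0 : 0 ≤ 3 * (2:ℝ) ^ ((m:ℝ) * (1/2)) * M :=
        mul_nonneg (mul_nonneg (by norm_num) (Real.rpow_nonneg two_pos.le _)) hM0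
      have hsq2 : (2:ℝ)^(m+3) * M^2 ≤ (3 * (2:ℝ) ^ ((m:ℝ) * (1/2)) * M)^2 := by
        have : (3 * (2:ℝ) ^ ((m:ℝ) * (1/2)) * M)^2
            = 9 * ((2:ℝ) ^ ((m:ℝ) * (1/2)))^2 * M^2 := by ring
        rw [this]
        have h2m : ((2:ℝ) ^ ((m:ℝ) * (1/2)))^2 = (2:ℝ)^(m:ℝ) := by
          rw [← Real.rpow_natCast ((2:ℝ) ^ ((m:ℝ) * (1/2))) 2, ← Real.rpow_mul two_pos.le]
          congr 1
          push_cast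
          ring
        rw [h2m]
        have h2m2 : (2:ℝ)^(m+3) = 8 * (2:ℝ)^(m:ℝ) := by
          rw [Real.rpow_natCast]
          ring
        rw [h2m2]
        nlinarith [Real.rpow_pos_of_pos two_pos (m:ℝ), sq_nonneg M]
      nlinarith
    -- sup bound
    have hMle : M ≤ B * π * (2:ℝ) ^ ((m:ℝ) * (-s)) := by
      have hnum : π ^ s ≤ π := by
        calc π ^ s ≤ π ^ (1:ℝ) := Real.rpow_le_rpow_of_exponent_le hπ1 hs1
          _ = π := Real.rpow_one π
      have hhs : h ^ s ≤ π * (2:ℝ) ^ ((m:ℝ) * (-s)) := by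
        have hh2 : h ≤ π * (2:ℝ) ^ (-(m:ℝ)) := by
          rw [hh, Real.rpow_neg two_pos.le, Real.rpow_natCast, ← div_eq_mul_inv]
          gcongr
          · exact one_le_two
          · exact Nat.le_succ m
        calc h ^ s ≤ (π * (2:ℝ) ^ (-(m:ℝ))) ^ s := Real.rpow_le_rpow hh0.le hh2 hs0.le
          _ = π ^ s * ((2:ℝ) ^ (-(m:ℝ))) ^ s :=
              Real.mul_rpow Real.pi_pos.le (Real.rpow_nonneg two_pos.le _)
          _ = π ^ s * (2:ℝ) ^ ((m:ℝ) * (-s)) := by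
              rw [← Real.rpow_mul two_pos.le]
              congr 1
              ring
          _ ≤ π * (2:ℝ) ^ ((m:ℝ) * (-s)) :=
              mul_le_mul_of_nonneg_right hnum (Real.rpow_nonneg two_pos.le _)
      calc M = B * h ^ s := hM
        _ ≤ B * (π * (2:ℝ) ^ ((m:ℝ) * (-s))) := mul_le_mul_of_nonneg_left hhs hB0
        _ = B * π * (2:ℝ) ^ ((m:ℝ) * (-s)) := by ring
    have hpoint : ∀ x : ℝ,
        ‖∑ ξ ∈ dyadicBlock m,
          σ ξ * fourierCoef f ξ * Complex.exp (Complex.I * (x:ℂ) * (ξ:ℂ))‖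
          ≤ K * B * (2:ℝ) ^ ((m:ℝ) * δ) := by
      intro x
      have step1 : ‖∑ ξ ∈ dyadicBlock m,
          σ ξ * fourierCoef f ξ * Complex.exp (Complex.I * (x:ℂ) * (ξ:ℂ))‖
          ≤ ∑ ξ ∈ dyadicBlock m, ‖σ ξ‖ * ‖fourierCoef f ξ‖ := by
        refine le_trans (norm_sum_le _ _) ?_
        apply Finset.sum_le_sum
        intro ξ _
        rw [norm_mul, norm_mul]
        have : ‖Complex.exp (Complex.I * (x:ℂ) * (ξ:ℂ))‖ = 1 := by
          rw [Complex.norm_exp]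
          simp
        rw [this, mul_one]
      have step2 : ∑ ξ ∈ dyadicBlock m, ‖σ ξ‖ * ‖fourierCoef f ξ‖
          ≤ (C * (2:ℝ) ^ ((m:ℝ) * (-ρ))) * Sg := by
        rw [hSg, Finset.mul_sum]
        apply Finset.sum_le_sum
        intro ξ hξ
        obtain ⟨hmem, hlo, hhi⟩ := by
          simpa [dyadicBlock, Finset.mem_filter] using hξ
        have hξ0 : ξ ≠ 0 := by
          intro hξz
          rw [hξz, abs_zero] at hlo
          have h2m : (0:ℤ) < 2^m := by positivity
          omega
        have h1 : ((2:ℝ)^m) ≤ |(ξ:ℝ)| := by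
          have : ((2^m : ℤ) : ℝ) ≤ ((|ξ| : ℤ) : ℝ) := by exact_mod_cast hlo
          simpa [Int.cast_abs] using this
        have hσξ : ‖σ ξ‖ ≤ C * (2:ℝ) ^ ((m:ℝ) * (-ρ)) := by
          refine (hσ ξ hξ0).trans ?_
          apply mul_le_mul_of_nonneg_left _ hC
          calc |(ξ:ℝ)| ^ (-ρ) ≤ ((2:ℝ)^m) ^ (-ρ) :=
              Real.rpow_le_rpow_of_nonpos (by positivity) h1 (by linarith)
            _ = (2:ℝ) ^ ((m:ℝ) * (-ρ)) := by
              rw [← Real.rpow_natCast (2:ℝ) m, ← Real.rpow_mul two_pos.le]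
        calc ‖σ ξ‖ * ‖fourierCoef f ξ‖
            ≤ (C * (2:ℝ) ^ ((m:ℝ) * (-ρ))) * ‖fourierCoef f ξ‖ :=
              mul_le_mul_of_nonneg_right hσξ (norm_nonneg _)
          _ ≤ (C * (2:ℝ) ^ ((m:ℝ) * (-ρ))) * ‖fourierCoef g ξ‖ :=
              mul_le_mul_of_nonneg_left (hfg ξ hξ)
                (mul_nonneg hC (Real.rpow_nonneg two_pos.le _))
      calc ‖∑ ξ ∈ dyadicBlock m,
            σ ξ * fourierCoef f ξ * Complex.exp (Complex.I * (x:ℂ) * (ξ:ℂ))‖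
          ≤ (C * (2:ℝ) ^ ((m:ℝ) * (-ρ))) * Sg := step1.trans step2
        _ ≤ (C * (2:ℝ) ^ ((m:ℝ) * (-ρ))) * (3 * (2:ℝ) ^ ((m:ℝ) * (1/2)) * M) := by
            exact mul_le_mul_of_nonneg_left hSgle
              (mul_nonneg hC (Real.rpow_nonneg two_pos.le _))
        _ ≤ (C * (2:ℝ) ^ ((m:ℝ) * (-ρ))) *
              (3 * (2:ℝ) ^ ((m:ℝ) * (1/2)) * (B * π * (2:ℝ) ^ ((m:ℝ) * (-s)))) := by
            refine mul_le_mul_of_nonneg_left ?_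
              (mul_nonneg hC (Real.rpow_nonneg two_pos.le _))
            exact mul_le_mul_of_nonneg_left hMle
              (mul_nonneg (by norm_num) (Real.rpow_nonneg two_pos.le _))
        _ = K * B * ((2:ℝ) ^ ((m:ℝ) * (-ρ)) * ((2:ℝ) ^ ((m:ℝ) * (1/2)) * (2:ℝ) ^ ((m:ℝ) * (-s)))) := by
            rw [hK]; ring
        _ = K * B * (2:ℝ) ^ ((m:ℝ) * δ) := by
            rw [← Real.rpow_add two_pos, ← Real.rpow_add two_pos]
            congr 2
            rw [hδ]; ring
    have hKB2 : 0 ≤ K * B * (2:ℝ) ^ ((m:ℝ) * δ) :=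
      mul_nonneg (mul_nonneg hK0 hB0) (Real.rpow_nonneg two_pos.le _)
    apply Real.iSup_le _ hKB2
    intro x
    exact Real.iSup_le (fun _ => hpoint x) hKB2
  -- series summation
  set E : ℝ := (K * B) ^ q with hE
  have hE0 : 0 ≤ E := Real.rpow_nonneg (mul_nonneg hK0 hB0) _
  set a : ℕ → ℝ := fun m => (2:ℝ) ^ ((m:ℝ) * r * q) *
      (⨆ x ∈ Set.Ico (0:ℝ) (2 * Real.pi),
        ‖∑ ξ ∈ dyadicBlock m,
          σ ξ * fourierCoef f ξ * Complex.exp (Complex.I * (x:ℂ) * (ξ:ℂ))‖) ^ q with ha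
  have hS0 : ∀ m : ℕ, 0 ≤ (⨆ x ∈ Set.Ico (0:ℝ) (2 * Real.pi),
        ‖∑ ξ ∈ dyadicBlock m,
          σ ξ * fourierCoef f ξ * Complex.exp (Complex.I * (x:ℂ) * (ξ:ℂ))‖) := by
    intro m
    apply Real.iSup_nonneg
    intro x
    apply Real.iSup_nonneg
    intro _
    exact norm_nonneg _
  have ha0 : ∀ m, 0 ≤ a m := by
    intro m
    exact mul_nonneg (Real.rpow_nonneg two_pos.le _) (Real.rpow_nonneg (hS0 m) _)
  have hale : ∀ m : ℕ, a m ≤ E * t ^ m := by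
    intro m
    have h1 : ((⨆ x ∈ Set.Ico (0:ℝ) (2 * Real.pi),
        ‖∑ ξ ∈ dyadicBlock m,
          σ ξ * fourierCoef f ξ * Complex.exp (Complex.I * (x:ℂ) * (ξ:ℂ))‖) : ℝ) ^ q
        ≤ (K * B * (2:ℝ) ^ ((m:ℝ) * δ)) ^ q :=
      Real.rpow_le_rpow (hS0 m) (key m) hq.le
    have h2 : (K * B * (2:ℝ) ^ ((m:ℝ) * δ)) ^ q
        = E * (2:ℝ) ^ ((m:ℝ) * δ * q) := by
      rw [Real.mul_rpow (mul_nonneg hK0 hB0) (Real.rpow_nonneg two_pos.le _),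
        ← Real.rpow_mul two_pos.le, ← hE]
    have h3 : (2:ℝ) ^ ((m:ℝ) * r * q) * ((2:ℝ) ^ ((m:ℝ) * δ * q)) = t ^ m := by
      rw [← Real.rpow_add two_pos, ht, ← Real.rpow_natCast ((2:ℝ) ^ ((r + δ) * q)) m,
        ← Real.rpow_mul two_pos.le]
      congr 1
      ring
    calc a m ≤ (2:ℝ) ^ ((m:ℝ) * r * q) * (K * B * (2:ℝ) ^ ((m:ℝ) * δ)) ^ q :=
        mul_le_mul_of_nonneg_left h1 (Real.rpow_nonneg two_pos.le _)
      _ = E * ((2:ℝ) ^ ((m:ℝ) * r * q) * (2:ℝ) ^ ((m:ℝ) * δ * q)) := by rw [h2]; ring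
      _ = E * t ^ m := by rw [h3]
  have hgeo : Summable (fun m : ℕ => E * t ^ m) :=
    (summable_geometric_of_lt_one ht0.le ht1).mul_left E
  have hsa : Summable a := Summable.of_nonneg_of_le ha0 hale hgeo
  have htsum : ∑' m, a m ≤ E * (1 - t)⁻¹ := by
    calc ∑' m, a m ≤ ∑' m, E * t ^ m := Summable.tsum_le_tsum hale hsa hgeo
      _ = E * ∑' m, t ^ m := tsum_mul_left
      _ = E * (1 - t)⁻¹ := by rw [tsum_geometric_of_lt_one ht0.le ht1]
  have hfinal : (∑' m, a m) ^ (1/q) ≤ K * G * B := by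
    have h1 : (∑' m, a m) ^ (1/q) ≤ (E * (1 - t)⁻¹) ^ (1/q) :=
      Real.rpow_le_rpow (tsum_nonneg ha0) htsum (by positivity)
    have h2 : (E * (1 - t)⁻¹) ^ (1/q) = (K * B) * G := by
      rw [Real.mul_rpow hE0 (inv_nonneg.mpr (by linarith)), hE,
        ← Real.rpow_mul (mul_nonneg hK0 hB0),
        mul_one_div_cancel hq.ne', Real.rpow_one, hG]
    calc (∑' m, a m) ^ (1/q) ≤ (E * (1 - t)⁻¹) ^ (1/q) := h1
      _ = K * B * G := h2
      _ = K * G * B := by ring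
  calc (∑' m, a m) ^ (1/q)
      ≤ K * G * B := hfinal
    _ ≤ K * G * (A + B) := by
        apply mul_le_mul_of_nonneg_left _ (mul_nonneg hK0 hG0)
        linarith
end

section
/- Let s ∈ (1/2, 1]. There exists a constant C such that for every 2π-periodic function f that is Hölder continuous of order s with norm ‖f‖_{Λ^s} = sup|f| + sup_{x,y≠0}|f(x-y)-f(x)|/|y|^s, one has ∑_{ξ∈ℤ} |f̂(ξ)| ≤ C‖f‖_{Λ^s}. -/
open MeasureTheory Real Complex intervalIntegral
open scoped ENNReal

private lemma coef_eq (f : ℝ → ℂ) (hp : Function.Periodic f (2 * Real.pi)) (ξ : ℤ) :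
    haveI : Fact (0 < 2 * Real.pi) := ⟨by positivity⟩
    fourierCoeff hp.lift ξ = fourierCoef f ξ := by
  haveI : Fact (0 < 2 * Real.pi) := ⟨by positivity⟩
  rw [fourierCoeff_eq_intervalIntegral _ _ 0]
  rw [fourierCoef, zero_add, Complex.real_smul]
  have h1 : ((1 / (2 * Real.pi) : ℝ) : ℂ) = 1 / (2 * Real.pi : ℂ) := by push_cast; ring
  rw [h1]
  congr 1
  apply intervalIntegral.integral_congr
  intro x hx
  simp only []
  rw [fourier_coe_apply, Function.Periodic.lift_coe, smul_eq_mul, mul_comm]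
  congr 1
  congr 1
  have h2 : (Real.pi : ℂ) ≠ 0 := by simp [Real.pi_ne_zero]
  push_cast
  field_simp

private lemma parseval_bound (f : ℝ → ℂ) (hf : Continuous f)
    (hp : Function.Periodic f (2 * Real.pi)) (M : ℝ) (hM : ∀ x, ‖f x‖ ≤ M) :
    Summable (fun ξ : ℤ => ‖fourierCoef f ξ‖ ^ 2) ∧ ∑' ξ : ℤ, ‖fourierCoef f ξ‖ ^ 2 ≤ M ^ 2 := by
  haveI : Fact (0 < 2 * Real.pi) := ⟨by positivity⟩
  set F : C(AddCircle (2 * Real.pi), ℂ) := ⟨hp.lift, continuous_coinduced_dom.2 hf⟩ with hF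
  set g := ContinuousMap.toLp (E := ℂ) 2 (AddCircle.haarAddCircle) ℂ F with hg
  have hcoef : ∀ ξ : ℤ, fourierCoeff (g : AddCircle (2 * Real.pi) → ℂ) ξ = fourierCoef f ξ := by
    intro ξ
    rw [fourierCoeff_toLp]
    exact coef_eq f hp ξ
  have hM0 : 0 ≤ M := le_trans (norm_nonneg _) (hM 0)
  have hsum : Summable (fun ξ : ℤ => ‖fourierCoeff (g : AddCircle (2 * Real.pi) → ℂ) ξ‖ ^ 2) := by
    have h := (lp.memℓp (fourierBasis.repr g)).summable (by norm_num : 0 < (2 : ℝ≥0∞).toReal)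
    simp_rw [fourierBasis_repr, show ((2:ℝ≥0∞)).toReal = (2:ℝ) by norm_num,
      Real.rpow_two] at h
    exact h
  have hts := tsum_sq_fourierCoeff g
  have hFb : ∀ t : AddCircle (2 * Real.pi), ‖F t‖ ≤ M := by
    intro t
    induction t using QuotientAddGroup.induction_on with
    | H x => exact (by simpa [hF, Function.Periodic.lift_coe] using hM x)
  have hint : ∫ t : AddCircle (2 * Real.pi), ‖(g : AddCircle (2 * Real.pi) → ℂ) t‖ ^ 2
      ∂AddCircle.haarAddCircle ≤ M ^ 2 := by
    have hae : (g : AddCircle (2 * Real.pi) → ℂ) =ᵐ[AddCircle.haarAddCircle] F :=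
      ContinuousMap.coeFn_toLp (p := 2) (μ := AddCircle.haarAddCircle) (𝕜 := ℂ) F
    rw [integral_congr_ae (hae.mono fun t ht => by rw [ht])]
    have : ∫ t : AddCircle (2 * Real.pi), ‖F t‖ ^ 2 ∂AddCircle.haarAddCircle ≤
        ∫ _t : AddCircle (2 * Real.pi), M ^ 2 ∂AddCircle.haarAddCircle := by
      apply MeasureTheory.integral_mono
      · exact (F.continuous.norm.pow 2).integrable_of_hasCompactSupport
          (isClosed_tsupport _).isCompact
      · exact integrable_const _
      · intro t
        exact pow_le_pow_left₀ (norm_nonneg _) (hFb t) 2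
    simpa [measure_univ] using this
  constructor
  · simp_rw [← hcoef]; exact hsum
  · calc ∑' ξ : ℤ, ‖fourierCoef f ξ‖ ^ 2
        = ∑' ξ : ℤ, ‖fourierCoeff (g : AddCircle (2 * Real.pi) → ℂ) ξ‖ ^ 2 := by simp [hcoef]
      _ ≤ M ^ 2 := hts ▸ hint

private lemma coef_shift (f : ℝ → ℂ) (hp : Function.Periodic f (2 * Real.pi)) (h : ℝ) (ξ : ℤ) :
    fourierCoef (fun x => f (x - h)) ξ
      = Complex.exp (-(Complex.I * (ξ:ℂ) * (h:ℂ))) * fourierCoef f ξ := by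
  set φ : ℝ → ℂ := fun u => f u * Complex.exp (-(Complex.I * (ξ:ℂ) * (u:ℂ))) with hφ
  have hφper : Function.Periodic φ (2 * Real.pi) := by
    intro u
    simp only [hφ]
    rw [hp u]
    congr 1
    push_cast
    rw [show -(Complex.I * (ξ:ℂ) * ((u:ℂ) + 2 * (Real.pi:ℂ)))
        = -(Complex.I * (ξ:ℂ) * (u:ℂ)) + (-ξ : ℤ) * (2 * (Real.pi:ℂ) * Complex.I) by push_cast; ring,
      Complex.exp_add, Complex.exp_int_mul_two_pi_mul_I, mul_one]
  have key : (∫ x in (0:ℝ)..(2 * Real.pi), f (x - h) * Complex.exp (-(Complex.I * (ξ:ℂ) * (x:ℂ))))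
      = Complex.exp (-(Complex.I * (ξ:ℂ) * (h:ℂ))) * ∫ x in (0:ℝ)..(2 * Real.pi), φ x := by
    have step1 : ∀ x : ℝ, f (x - h) * Complex.exp (-(Complex.I * (ξ:ℂ) * (x:ℂ)))
        = Complex.exp (-(Complex.I * (ξ:ℂ) * (h:ℂ))) * φ (x - h) := by
      intro x
      simp only [hφ]
      have e : Complex.exp (-(Complex.I * (ξ:ℂ) * (h:ℂ))) *
          Complex.exp (-(Complex.I * (ξ:ℂ) * ((x - h : ℝ):ℂ)))
          = Complex.exp (-(Complex.I * (ξ:ℂ) * (x:ℂ))) := by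
        rw [← Complex.exp_add]
        congr 1
        push_cast
        ring
      rw [← e]
      ring
    simp_rw [step1]
    rw [intervalIntegral.integral_const_mul]
    congr 1
    rw [intervalIntegral.integral_comp_sub_right φ h]
    have := hφper.intervalIntegral_add_eq (0 - h) 0
    rw [zero_add] at this
    rw [show (2 * Real.pi - h) = 0 - h + 2 * Real.pi by ring] at *
    simpa using this
  rw [fourierCoef, fourierCoef, key]
  ring

private lemma one_le_abs_exp_sub_one {θ : ℝ} (hc : Real.cos θ ≤ 1/2) :
    1 ≤ ‖Complex.exp ((θ:ℂ) * Complex.I) - 1‖ := by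
  have hre : (Complex.exp ((θ:ℂ) * Complex.I) - 1).re = Real.cos θ - 1 := by
    simp [Complex.exp_ofReal_mul_I_re]
  have him : (Complex.exp ((θ:ℂ) * Complex.I) - 1).im = Real.sin θ := by
    simp [Complex.exp_ofReal_mul_I_im]
  have hsq : ‖Complex.exp ((θ:ℂ) * Complex.I) - 1‖ ^ 2 = 2 - 2 * Real.cos θ := by
    rw [Complex.sq_norm, Complex.normSq_apply, hre, him]
    have := Real.sin_sq_add_cos_sq θ
    nlinarith
  nlinarith [norm_nonneg (Complex.exp ((θ:ℂ) * Complex.I) - 1)]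

private lemma exp_neg_eq {ξ : ℤ} {h : ℝ} :
    Complex.exp (-(Complex.I * (ξ:ℂ) * (h:ℂ))) = Complex.exp (((-(ξ * h) : ℝ) : ℂ) * Complex.I) := by
  congr 1
  push_cast
  ring

private lemma coef_bound (f : ℝ → ℂ) (A : ℝ) (hA : ∀ x, ‖f x‖ ≤ A) (ξ : ℤ) :
    ‖fourierCoef f ξ‖ ≤ A := by
  have hA0 : 0 ≤ A := le_trans (norm_nonneg _) (hA 0)
  have key : ‖∫ x in (0:ℝ)..(2 * Real.pi), f x * Complex.exp (-(Complex.I * (ξ:ℂ) * (x:ℂ)))‖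
      ≤ A * |2 * Real.pi - 0| := by
    apply intervalIntegral.norm_integral_le_of_norm_le_const
    intro x _
    rw [norm_mul]
    have : ‖Complex.exp (-(Complex.I * (ξ:ℂ) * (x:ℂ)))‖ = 1 := by
      rw [Complex.norm_exp]
      simp
    rw [this, mul_one]
    exact hA x
  rw [fourierCoef, norm_mul]
  have h1 : ‖(1 / (2 * Real.pi) : ℂ)‖ = 1 / (2 * Real.pi) := by
    rw [show ((1 / (2 * Real.pi) : ℂ)) = ((1 / (2 * Real.pi) : ℝ) : ℂ) by push_cast; ring]
    rw [Complex.norm_real, Real.norm_eq_abs, abs_of_pos (by positivity)]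
  rw [h1]
  have hπ : (0:ℝ) < 2 * Real.pi := by positivity
  calc 1 / (2 * Real.pi) * ‖∫ x in (0:ℝ)..(2 * Real.pi), f x * Complex.exp (-(Complex.I * (ξ:ℂ) * (x:ℂ)))‖
      ≤ 1 / (2 * Real.pi) * (A * |2 * Real.pi - 0|) := by
        apply mul_le_mul_of_nonneg_left key (by positivity)
    _ = A := by
        rw [sub_zero, abs_of_pos hπ]
        field_simp

private lemma coef_sub (f g : ℝ → ℂ) (hf : Continuous f) (hg : Continuous g) (ξ : ℤ) :
    fourierCoef (fun x => f x - g x) ξ = fourierCoef f ξ - fourierCoef g ξ := by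
  have hint : ∀ (u : ℝ → ℂ), Continuous u → IntervalIntegrable
      (fun x => u x * Complex.exp (-(Complex.I * (ξ:ℂ) * (x:ℂ)))) volume 0 (2 * Real.pi) := by
    intro u hu
    exact (hu.mul (Complex.continuous_exp.comp (by continuity))).intervalIntegrable _ _
  rw [fourierCoef, fourierCoef, fourierCoef]
  have : (∫ x in (0:ℝ)..(2 * Real.pi), (f x - g x) * Complex.exp (-(Complex.I * (ξ:ℂ) * (x:ℂ))))
      = (∫ x in (0:ℝ)..(2 * Real.pi), f x * Complex.exp (-(Complex.I * (ξ:ℂ) * (x:ℂ))))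
        - ∫ x in (0:ℝ)..(2 * Real.pi), g x * Complex.exp (-(Complex.I * (ξ:ℂ) * (x:ℂ))) := by
    rw [← intervalIntegral.integral_sub (hint f hf) (hint g hg)]
    congr 1
    ext x
    ring
  rw [this]
  ring

/-- Bernstein's theorem on the circle. -/
theorem bernstein_theorem (s : ℝ) (hs0 : 1/2 < s) (hs1 : s ≤ 1) :
    ∃ C : ℝ, ∀ f : ℝ → ℂ, Continuous f → (∀ x, f (x + 2 * Real.pi) = f x) →
      ∀ A B : ℝ, (∀ x, ‖f x‖ ≤ A) →
      (∀ x y : ℝ, ‖f (x - y) - f x‖ ≤ B * |y| ^ s) →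
      ∑' ξ : ℤ, ‖fourierCoef f ξ‖ ≤ C * (A + B) := by
  have hπ : (0:ℝ) < Real.pi := Real.pi_pos
  set r : ℝ := (2:ℝ) ^ ((1:ℝ)/2 - s) with hr
  have hr0 : 0 < r := Real.rpow_pos_of_pos two_pos _
  have hr1 : r < 1 := Real.rpow_lt_one_of_one_lt_of_neg one_lt_two (by linarith)
  have hinv : 0 < (1 - r)⁻¹ := by
    apply inv_pos.2; linarith
  refine ⟨1 + 6 * (1 - r)⁻¹, ?_⟩
  intro f hf hper A B hA hB
  have hp : Function.Periodic f (2 * Real.pi) := hper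
  have hA' : ∀ x, ‖f x‖ ≤ A := fun x => by exact hA x
  have hA0 : 0 ≤ A := le_trans (norm_nonneg _) (hA' 0)
  have hB0 : 0 ≤ B := by
    have := hB 0 1
    simp [Real.one_rpow] at this
    exact le_trans (norm_nonneg _) this
  set a : ℤ → ℝ := fun ξ => ‖fourierCoef f ξ‖ with ha
  set Ic : ℕ → Finset ℤ := fun j => Finset.Icc (-(2^j-1) : ℤ) (2^j-1) with hIc
  have hsub : ∀ j, Ic j ⊆ Ic (j+1) := by
    intro j
    apply Finset.Icc_subset_Icc
    · have : (2:ℤ)^j ≤ 2^(j+1) := by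
        apply pow_le_pow_right₀ one_le_two (by omega)
      linarith
    · have : (2:ℤ)^j ≤ 2^(j+1) := by
        apply pow_le_pow_right₀ one_le_two (by omega)
      linarith
  -- block bound
  have blockBound : ∀ j : ℕ, ∑ ξ ∈ Ic (j+1) \ Ic j, a ξ ≤ 6 * B * r ^ j := by
    intro j
    set h : ℝ := 2 * Real.pi / (3 * 2^j) with hh
    have hh0 : 0 < h := by positivity
    set g : ℝ → ℂ := fun x => f (x - h) - f x with hgdef
    have hshiftc : Continuous (fun x : ℝ => f (x - h)) :=
      hf.comp (continuous_id.sub continuous_const)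
    have hgc : Continuous g := hshiftc.sub hf
    have hgp : Function.Periodic g (2 * Real.pi) := by
      intro x
      simp only [hgdef]
      rw [show x + 2 * Real.pi - h = x - h + 2 * Real.pi by ring, hp (x - h), hp x]
    have hgb : ∀ x, ‖g x‖ ≤ B * h ^ s := by
      intro x
      have := hB x h
      rw [abs_of_pos hh0] at this
      simpa [hgdef] using this
    obtain ⟨hsum2, hts2⟩ := parseval_bound g hgc hgp (B * h ^ s)
      (fun x => hgb x)
    have hcg : ∀ ξ : ℤ, fourierCoef g ξ
        = (Complex.exp (-(Complex.I * (ξ:ℂ) * (h:ℂ))) - 1) * fourierCoef f ξ := by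
      intro ξ
      have : fourierCoef g ξ = fourierCoef (fun x => f (x - h)) ξ - fourierCoef f ξ :=
        coef_sub _ _ hshiftc hf ξ
      rw [this, coef_shift f hp h ξ]
      ring
    -- lower bound on the multiplier on the block
    have hlow : ∀ ξ ∈ Ic (j+1) \ Ic j, a ξ ≤ ‖fourierCoef g ξ‖ := by
      intro ξ hξ
      rw [Finset.mem_sdiff, Finset.mem_Icc] at hξ
      obtain ⟨⟨hl, hu⟩, hnot⟩ := hξ
      have hm : (1:ℤ) ≤ 2^j := one_le_pow₀ one_le_two
      have hm1 : (1:ℤ) ≤ 2^(j+1) := one_le_pow₀ one_le_two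
      have habs1 : (2:ℤ)^j ≤ |ξ| := by
        rw [Finset.mem_Icc] at hnot
        push_neg at hnot
        rcases le_or_gt ξ 0 with hc | hc
        · rw [abs_of_nonpos hc]
          by_contra hcon
          push_neg at hcon
          exact absurd (hnot (by linarith)) (by push_neg; linarith)
        · rw [abs_of_pos hc]
          by_contra hcon
          push_neg at hcon
          exact absurd (hnot (by linarith)) (by push_neg; linarith)
      have habs2 : |ξ| ≤ 2^(j+1) := by
        rw [abs_le]; constructor <;> linarith
      -- real versions
      have hrabs1 : (2:ℝ)^j ≤ |(ξ:ℝ)| := by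
        rw [← Int.cast_abs]
        exact_mod_cast habs1
      have hrabs2 : |(ξ:ℝ)| ≤ (2:ℝ)^(j+1) := by
        rw [← Int.cast_abs]
        exact_mod_cast habs2
      have hpj : (0:ℝ) < 2^j := by positivity
      have e1 : (2:ℝ)^j * h = 2 * Real.pi / 3 := by
        rw [hh]; field_simp
      have hmul : 1 ≤ ‖Complex.exp (-(Complex.I * (ξ:ℂ) * (h:ℂ))) - 1‖ := by
        rw [exp_neg_eq]
        apply one_le_abs_exp_sub_one
        rw [Real.cos_neg, ← Real.cos_abs, abs_mul, abs_of_pos hh0]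
        have ht1 : Real.pi / 2 ≤ |(ξ:ℝ)| * h := by
          have : (2:ℝ)^j * h ≤ |(ξ:ℝ)| * h :=
            mul_le_mul_of_nonneg_right hrabs1 hh0.le
          rw [e1] at this
          linarith
        have ht2 : |(ξ:ℝ)| * h ≤ Real.pi + Real.pi / 2 := by
          have : |(ξ:ℝ)| * h ≤ (2:ℝ)^(j+1) * h :=
            mul_le_mul_of_nonneg_right hrabs2 hh0.le
          have e2 : (2:ℝ)^(j+1) * h = 2 * (2 * Real.pi / 3) := by
            rw [← e1, pow_succ]; ring
          rw [e2] at this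
          linarith
        have := Real.cos_nonpos_of_pi_div_two_le_of_le ht1 (by linarith)
        linarith
      rw [hcg ξ, norm_mul]
      calc a ξ = 1 * ‖fourierCoef f ξ‖ := by rw [one_mul]
        _ ≤ ‖Complex.exp (-(Complex.I * (ξ:ℂ) * (h:ℂ))) - 1‖ * ‖fourierCoef f ξ‖ :=
            mul_le_mul_of_nonneg_right hmul (norm_nonneg _)
    -- Cauchy-Schwarz
    set blk := Ic (j+1) \ Ic j with hblk
    have hBh0 : 0 ≤ B * h ^ s := mul_nonneg hB0 (Real.rpow_nonneg hh0.le s)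
    have sum_sq_le : ∑ ξ ∈ blk, a ξ ^ 2 ≤ (B * h ^ s) ^ 2 := by
      calc ∑ ξ ∈ blk, a ξ ^ 2 ≤ ∑ ξ ∈ blk, ‖fourierCoef g ξ‖ ^ 2 := by
            apply Finset.sum_le_sum
            intro ξ hξ
            exact pow_le_pow_left₀ (norm_nonneg _) (hlow ξ hξ) 2
        _ ≤ ∑' ξ : ℤ, ‖fourierCoef g ξ‖ ^ 2 :=
            Summable.sum_le_tsum blk (fun ξ _ => by positivity) hsum2
        _ ≤ (B * h ^ s) ^ 2 := hts2
    have card_le : ((blk.card : ℕ) : ℝ) ≤ 2 ^ (j+2) := by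
      have h1 : blk.card ≤ (Ic (j+1)).card := Finset.card_le_card Finset.sdiff_subset
      have h2 : (Ic (j+1)).card = (2 * 2^(j+1) - 1 : ℤ).toNat := by
        rw [hIc]
        simp only []
        rw [Int.card_Icc]
        congr 1
        ring
      have h3 : ((2 * 2^(j+1) - 1 : ℤ).toNat : ℝ) ≤ 2 ^ (j+2) := by
        have h0 : (0:ℤ) ≤ 2 * 2^(j+1) - 1 := by
          have : (1:ℤ) ≤ 2^(j+1) := one_le_pow₀ one_le_two
          linarith
        have h4 : (((2 * 2^(j+1) - 1 : ℤ).toNat : ℤ) : ℝ) = ((2 * 2^(j+1) - 1 : ℤ) : ℝ) := by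
          rw [Int.toNat_of_nonneg h0]
        push_cast at h4 ⊢
        rw [h4]
        rw [show (2:ℝ)^(j+2) = 2 * 2^(j+1) by ring]
        linarith
      calc ((blk.card : ℕ) : ℝ) ≤ ((Ic (j+1)).card : ℝ) := by exact_mod_cast h1
        _ = ((2 * 2^(j+1) - 1 : ℤ).toNat : ℝ) := by rw [h2]
        _ ≤ 2 ^ (j+2) := h3
    have hX : (0:ℝ) < (2:ℝ) ^ ((j:ℝ)/2) := Real.rpow_pos_of_pos two_pos _
    have hXsq : ((2:ℝ) ^ ((j:ℝ)/2)) ^ 2 = (2:ℝ) ^ (j:ℕ) := by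
      rw [← Real.rpow_natCast ((2:ℝ) ^ ((j:ℝ)/2)) 2, ← Real.rpow_mul (by norm_num : (0:ℝ) ≤ 2)]
      rw [show (j:ℝ)/2 * (2:ℕ) = (j:ℝ) by push_cast; ring]
      rw [Real.rpow_natCast]
    have key_sq : (∑ ξ ∈ blk, a ξ) ^ 2 ≤ (2 * (2:ℝ) ^ ((j:ℝ)/2) * (B * h ^ s)) ^ 2 := by
      calc (∑ ξ ∈ blk, a ξ) ^ 2 ≤ (blk.card : ℝ) * ∑ ξ ∈ blk, a ξ ^ 2 :=
            sq_sum_le_card_mul_sum_sq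
        _ ≤ 2 ^ (j+2) * (B * h ^ s) ^ 2 := by
            apply mul_le_mul card_le sum_sq_le (Finset.sum_nonneg fun ξ _ => by positivity)
              (by positivity)
        _ = (2 * (2:ℝ) ^ ((j:ℝ)/2) * (B * h ^ s)) ^ 2 := by
            rw [show (2 * (2:ℝ) ^ ((j:ℝ)/2) * (B * h ^ s)) ^ 2
              = ((2:ℝ) ^ ((j:ℝ)/2)) ^ 2 * (2^2 * (B * h ^ s)^2) by ring, hXsq]
            rw [show (2:ℝ)^(j+2) = 2^(j:ℕ) * 2^2 by ring]
            ring
    have key1 : ∑ ξ ∈ blk, a ξ ≤ 2 * (2:ℝ) ^ ((j:ℝ)/2) * (B * h ^ s) := by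
      have hnn : 0 ≤ ∑ ξ ∈ blk, a ξ := Finset.sum_nonneg fun ξ _ => norm_nonneg _
      have hrhs : 0 ≤ 2 * (2:ℝ) ^ ((j:ℝ)/2) * (B * h ^ s) := by positivity
      nlinarith
    -- convert to geometric bound
    have hhs : h ^ s ≤ 3 * (2:ℝ) ^ (-(j:ℝ) * s) := by
      have hhe : h = (2 * Real.pi / 3) * (2:ℝ) ^ (-(j:ℝ)) := by
        rw [Real.rpow_neg (by norm_num : (0:ℝ) ≤ 2), Real.rpow_natCast]
        rw [hh]
        field_simp
      rw [hhe, Real.mul_rpow (by positivity) (by positivity)]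
      rw [← Real.rpow_mul (by norm_num : (0:ℝ) ≤ 2)]
      have hbase : (1:ℝ) ≤ 2 * Real.pi / 3 := by
        have := Real.pi_gt_three
        linarith
      have h1 : (2 * Real.pi / 3) ^ s ≤ (2 * Real.pi / 3) ^ (1:ℝ) :=
        Real.rpow_le_rpow_of_exponent_le hbase hs1
      rw [Real.rpow_one] at h1
      have h2 : 2 * Real.pi / 3 ≤ 3 := by
        have := Real.pi_le_four
        linarith
      have h3 : (0:ℝ) ≤ (2:ℝ) ^ (-(j:ℝ) * s) := (Real.rpow_pos_of_pos two_pos _).le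
      apply mul_le_mul (by linarith) le_rfl h3 (by norm_num)
    have hrj : (2:ℝ) ^ ((j:ℝ)/2) * (2:ℝ) ^ (-(j:ℝ) * s) = r ^ j := by
      rw [← Real.rpow_add two_pos, hr]
      rw [← Real.rpow_natCast ((2:ℝ) ^ ((1:ℝ)/2 - s)) j]
      rw [← Real.rpow_mul (by norm_num : (0:ℝ) ≤ 2)]
      congr 1
      ring
    calc ∑ ξ ∈ blk, a ξ ≤ 2 * (2:ℝ) ^ ((j:ℝ)/2) * (B * h ^ s) := key1
      _ ≤ 2 * (2:ℝ) ^ ((j:ℝ)/2) * (B * (3 * (2:ℝ) ^ (-(j:ℝ) * s))) := by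
          apply mul_le_mul_of_nonneg_left _ (by positivity)
          exact mul_le_mul_of_nonneg_left hhs hB0
      _ = 6 * B * ((2:ℝ) ^ ((j:ℝ)/2) * (2:ℝ) ^ (-(j:ℝ) * s)) := by ring
      _ = 6 * B * r ^ j := by rw [hrj]
  -- partial sums over Ic N
  have partialBound : ∀ N : ℕ, ∑ ξ ∈ Ic N, a ξ ≤ A + ∑ j ∈ Finset.range N, 6 * B * r ^ j := by
    intro N
    induction N with
    | zero =>
        have : Ic 0 = {0} := by
          rw [hIc]
          norm_num
        rw [this, Finset.sum_singleton, Finset.range_zero, Finset.sum_empty, add_zero]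
        exact coef_bound f A hA' 0
    | succ N ih =>
        have hdisj := Finset.sum_sdiff (f := a) (hsub N)
        rw [Finset.sum_range_succ]
        calc ∑ ξ ∈ Ic (N+1), a ξ
            = ∑ ξ ∈ Ic (N+1) \ Ic N, a ξ + ∑ ξ ∈ Ic N, a ξ := hdisj.symm
          _ ≤ 6 * B * r ^ N + (A + ∑ j ∈ Finset.range N, 6 * B * r ^ j) := by
              have := blockBound N
              linarith
          _ = A + (∑ j ∈ Finset.range N, 6 * B * r ^ j + 6 * B * r ^ N) := by ring
  -- geometric series
  have geo : ∀ N : ℕ, ∑ j ∈ Finset.range N, 6 * B * r ^ j ≤ 6 * B * (1 - r)⁻¹ := by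
    intro N
    have hgs : ∑ j ∈ Finset.range N, r ^ j ≤ (1 - r)⁻¹ := by
      refine sum_le_hasSum (L := SummationFilter.unconditional ℕ) _ (fun j _ => (pow_pos hr0 j).le) ?_
      exact hasSum_geometric_of_lt_one hr0.le hr1
    calc ∑ j ∈ Finset.range N, 6 * B * r ^ j = 6 * B * ∑ j ∈ Finset.range N, r ^ j := by
          rw [Finset.mul_sum]
      _ ≤ 6 * B * (1 - r)⁻¹ := by
          apply mul_le_mul_of_nonneg_left hgs (by positivity)
  -- bound for any finset
  have main : ∀ u : Finset ℤ, ∑ ξ ∈ u, a ξ ≤ A + 6 * B * (1 - r)⁻¹ := by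
    intro u
    set N := u.sup (fun ξ => ξ.natAbs) with hN
    have husub : u ⊆ Ic N := by
      intro ξ hξ
      have h1 : ξ.natAbs ≤ N := Finset.le_sup (f := fun ξ => ξ.natAbs) hξ
      have h2 : N < 2^N := Nat.lt_two_pow_self (n := N)
      have h3 : (ξ.natAbs : ℤ) ≤ 2^N - 1 := by
        have ha1 : (ξ.natAbs : ℤ) ≤ (N : ℤ) := by exact_mod_cast h1
        have ha2 : (N : ℤ) < 2^N := by exact_mod_cast h2
        linarith
      rw [hIc]
      simp only [Finset.mem_Icc]
      have habs : |ξ| ≤ 2^N - 1 := by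
        rw [Int.abs_eq_natAbs]
        exact h3
      rw [abs_le] at habs
      exact ⟨by linarith [habs.1], habs.2⟩
    calc ∑ ξ ∈ u, a ξ ≤ ∑ ξ ∈ Ic N, a ξ :=
          Finset.sum_le_sum_of_subset_of_nonneg husub (fun ξ _ _ => norm_nonneg _)
      _ ≤ A + ∑ j ∈ Finset.range N, 6 * B * r ^ j := partialBound N
      _ ≤ A + 6 * B * (1 - r)⁻¹ := by linarith [geo N]
  -- conclude
  have hfinal : A + 6 * B * (1 - r)⁻¹ ≤ (1 + 6 * (1 - r)⁻¹) * (A + B) := by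
    nlinarith [mul_nonneg hA0 hinv.le, mul_nonneg hB0 hinv.le]
  have hc0 : (0:ℝ) ≤ (1 + 6 * (1 - r)⁻¹) * (A + B) := by
    apply mul_nonneg (by linarith) (by linarith)
  exact tsum_le_of_sum_le' hc0 fun u => le_trans (main u) hfinal
end
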